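/- arXiv:2003.03743 — 3 statements merged into one kernel-verified Lean document; each statement's English description precedes it below -/
import Mathlib

section
/- Let H ⊂ SL_d(ℤ) ⋉ ℝ^d be a subgroup and S a generating set of H. Let Γ be the image of H under the projection to SL_d(ℤ). Assume that Γ acts strongly irreducibly on ℝ^d. Then for any x ∈ 𝕋^d, the following are equivalent: (1) the orbit Hx ⊂ 𝕋^d is finite; (2) there exists a positive integer q such that for all g ∈ S, gx − x ∈ (1/q)ℤ^d/ℤ^d; (3) there exists a positive integer q such that for all g ∈ H, gx − x ∈ (1/q)ℤ^d/ℤ^d. -/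
set_option synthInstance.maxHeartbeats 1000000
set_option maxHeartbeats 1000000
set_option linter.unusedSectionVars false

open MeasureTheory Matrix Filter Metric
open scoped BigOperators ENNReal Real

noncomputable section

instance : Fact ((0:ℝ) < 1) := ⟨one_pos⟩

abbrev SLZ (d : ℕ) := Matrix.SpecialLinearGroup (Fin d) ℤ

abbrev Torus (d : ℕ) := Fin d → AddCircle (1 : ℝ)

instance (d : ℕ) : MeasurableSpace (SLZ d) := ⊤

/-- Generic affine group `G ⋉ V` where `G` acts on `V` by additive automorphisms. -/
@[ext] structure AffOf (G V : Type*) where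
  lin : G
  trans : V

namespace AffOf

variable {G V : Type*} [Group G] [AddCommGroup V] [DistribMulAction G V]

instance : Mul (AffOf G V) := ⟨fun g h => ⟨g.lin * h.lin, g.lin • h.trans + g.trans⟩⟩
instance : One (AffOf G V) := ⟨⟨1, 0⟩⟩
instance : Inv (AffOf G V) := ⟨fun g => ⟨g.lin⁻¹, -(g.lin⁻¹ • g.trans)⟩⟩

@[simp] lemma mul_lin (g h : AffOf G V) : (g * h).lin = g.lin * h.lin := rfl
@[simp] lemma mul_trans (g h : AffOf G V) : (g * h).trans = g.lin • h.trans + g.trans := rfl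
@[simp] lemma one_lin : (1 : AffOf G V).lin = 1 := rfl
@[simp] lemma one_trans : (1 : AffOf G V).trans = 0 := rfl

instance : Group (AffOf G V) where
  mul_assoc a b c := by
    ext
    · exact mul_assoc _ _ _
    · show (a.lin * b.lin) • c.trans + (a.lin • b.trans + a.trans)
        = a.lin • (b.lin • c.trans + b.trans) + a.trans
      rw [mul_smul, smul_add, add_assoc]
  one_mul a := by
    ext
    · exact one_mul _
    · show (1 : G) • a.trans + 0 = a.trans
      simp
  mul_one a := by
    ext
    · exact mul_one _
    · show a.lin • (0 : V) + a.trans = a.trans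
      simp
  inv_mul_cancel a := by
    ext
    · exact inv_mul_cancel _
    · show a.lin⁻¹ • a.trans + -(a.lin⁻¹ • a.trans) = 0
      simp

/-- The projection onto the linear part, as a group homomorphism. -/
def linHom : AffOf G V →* G where
  toFun := AffOf.lin
  map_one' := rfl
  map_mul' _ _ := rfl

/-- The affine action of `AffOf G V` on `V`. -/
def aff (g : AffOf G V) (v : V) : V := g.lin • v + g.trans

/-- Equivalence with the product type (used for `Fintype`/measurable structures). -/
def equivProd : AffOf G V ≃ G × V where
  toFun g := (g.lin, g.trans)
  invFun p := ⟨p.1, p.2⟩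
  left_inv _ := rfl
  right_inv _ := rfl

end AffOf

instance {G V : Type*} [Fintype G] [Fintype V] : Fintype (AffOf G V) :=
  Fintype.ofEquiv _ (AffOf.equivProd (G := G) (V := V)).symm

instance {G V : Type*} [DecidableEq G] [DecidableEq V] : DecidableEq (AffOf G V) :=
  fun a b => decidable_of_iff (a.lin = b.lin ∧ a.trans = b.trans) AffOf.ext_iff.symm

instance {G V : Type*} [MeasurableSpace G] [MeasurableSpace V] :
    MeasurableSpace (AffOf G V) :=
  MeasurableSpace.comap AffOf.equivProd inferInstance

/-- The action of `SL_d(ℤ)` on the torus `𝕋^d`. -/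
instance torusAction (d : ℕ) : DistribMulAction (SLZ d) (Torus d) where
  smul γ x := fun i => ∑ j, (γ.1 i j) • x j
  one_smul x := by
    funext i
    show ∑ j, ((1 : SLZ d).1 i j) • x j = x i
    simp [Matrix.one_apply, ite_smul]
  mul_smul γ₁ γ₂ x := by
    funext i
    show ∑ j, ((γ₁ * γ₂).1 i j) • x j = ∑ k, (γ₁.1 i k) • ∑ j, (γ₂.1 k j) • x j
    simp only [Matrix.SpecialLinearGroup.coe_mul, Matrix.mul_apply, Finset.sum_smul,
      Finset.smul_sum, mul_smul]
    exact Finset.sum_comm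
  smul_zero γ := by
    funext i
    show ∑ j, (γ.1 i j) • (0 : AddCircle (1:ℝ)) = 0
    simp
  smul_add γ x y := by
    funext i
    show ∑ j, (γ.1 i j) • (x j + y j) = (∑ j, (γ.1 i j) • x j) + ∑ j, (γ.1 i j) • y j
    simp [smul_add, Finset.sum_add_distrib]

/-- `SL_d(ℤ) ⋉ 𝕋^d`. -/
abbrev Aff (d : ℕ) := AffOf (SLZ d) (Torus d)

/-- Cast an integer matrix in `SL_d(ℤ)` to a real matrix. -/
def toR {d : ℕ} (γ : SLZ d) : Matrix (Fin d) (Fin d) ℝ := γ.1.map (Int.cast : ℤ → ℝ)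

/-- Cast an integer matrix in `SL_d(ℤ)` to a rational matrix. -/
def toQ {d : ℕ} (γ : SLZ d) : Matrix (Fin d) (Fin d) ℚ := γ.1.map (Int.cast : ℤ → ℚ)

/-- Cast an integer matrix in `SL_d(ℤ)` to a complex matrix. -/
def toC {d : ℕ} (γ : SLZ d) : Matrix (Fin d) (Fin d) ℂ := γ.1.map (Int.cast : ℤ → ℂ)

lemma toR_one {d : ℕ} : toR (1 : SLZ d) = 1 := by
  rw [toR, Matrix.SpecialLinearGroup.coe_one, Matrix.map_one _ Int.cast_zero Int.cast_one]

lemma toR_mul {d : ℕ} (γ₁ γ₂ : SLZ d) : toR (γ₁ * γ₂) = toR γ₁ * toR γ₂ := by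
  simp only [toR, Matrix.SpecialLinearGroup.coe_mul]
  exact Matrix.map_mul (f := Int.castRingHom ℝ)

/-- The action of `SL_d(ℤ)` on `ℝ^d`. -/
instance realAction (d : ℕ) : DistribMulAction (SLZ d) (Fin d → ℝ) where
  smul γ v := (toR γ).mulVec v
  one_smul v := by show (toR 1).mulVec v = v; rw [toR_one, Matrix.one_mulVec]
  mul_smul γ₁ γ₂ v := by
    show (toR (γ₁ * γ₂)).mulVec v = (toR γ₁).mulVec ((toR γ₂).mulVec v)
    rw [toR_mul, Matrix.mulVec_mulVec]
  smul_zero γ := by show (toR γ).mulVec 0 = 0; rw [Matrix.mulVec_zero]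
  smul_add γ v w := by
    show (toR γ).mulVec (v + w) = (toR γ).mulVec v + (toR γ).mulVec w
    rw [Matrix.mulVec_add]

/-- `SL_d(ℤ) ⋉ ℝ^d`. -/
abbrev AffR (d : ℕ) := AffOf (SLZ d) (Fin d → ℝ)

/-- The action of `SL_d(𝔽_p)` on `𝔽_p^d`. -/
instance modpAction (p d : ℕ) :
    DistribMulAction (Matrix.SpecialLinearGroup (Fin d) (ZMod p)) (Fin d → ZMod p) where
  smul γ v := γ.1.mulVec v
  one_smul v := by
    show (1 : Matrix.SpecialLinearGroup (Fin d) (ZMod p)).1.mulVec v = v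
    simp [Matrix.SpecialLinearGroup.coe_one, Matrix.one_mulVec]
  mul_smul γ₁ γ₂ v := by
    show (γ₁ * γ₂).1.mulVec v = γ₁.1.mulVec (γ₂.1.mulVec v)
    rw [Matrix.SpecialLinearGroup.coe_mul, Matrix.mulVec_mulVec]
  smul_zero γ := Matrix.mulVec_zero _
  smul_add γ v w := Matrix.mulVec_add _ _ _

/-- `SL_d(𝔽_p) ⋉ 𝔽_p^d`. -/
abbrev AffP (p d : ℕ) := AffOf (Matrix.SpecialLinearGroup (Fin d) (ZMod p)) (Fin d → ZMod p)

instance (p d : ℕ) : MeasurableSpace (Matrix.SpecialLinearGroup (Fin d) (ZMod p)) := ⊤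
instance (p d : ℕ) : MeasurableSpace (Fin d → ZMod p) := ⊤

/-- The projection of `ℝ^d` onto the torus. -/
def projT {d : ℕ} (v : Fin d → ℝ) : Torus d := fun i => (v i : AddCircle (1:ℝ))

/-- The affine action of `SL_d(ℤ) ⋉ ℝ^d` on the torus. -/
def affRT {d : ℕ} (g : AffR d) (x : Torus d) : Torus d := g.lin • x + projT g.trans

/-- The support of a measure on a discrete-like space. -/
def msupport {α : Type*} [MeasurableSpace α] (μ : Measure α) : Set α := {a | μ {a} ≠ 0}

/-- Convolution of two measures on a group. -/
def mconv {G : Type*} [Mul G] [MeasurableSpace G] (μ ν : Measure G) : Measure G :=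
  (μ.prod ν).map fun p => p.1 * p.2

/-- Convolution power `μ^{*n}` (with `μ^{*0} = δ_1`). -/
def mconvPow {G : Type*} [Monoid G] [MeasurableSpace G] (μ : Measure G) : ℕ → Measure G
  | 0 => Measure.dirac 1
  | n + 1 => mconv μ (mconvPow μ n)

/-- Convolution of a measure on a set of transformations with a measure on a space. -/
def aconv {G X : Type*} [MeasurableSpace G] [MeasurableSpace X] (act : G → X → X)
    (μ : Measure G) (ν : Measure X) : Measure X :=
  (μ.prod ν).map fun p => act p.1 p.2

/-- `μ^{*n} * δ_x` for the affine random walk on the torus. -/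
def walk {d : ℕ} (μ : Measure (Aff d)) (x : Torus d) (n : ℕ) : Measure (Torus d) :=
  aconv AffOf.aff (mconvPow μ n) (Measure.dirac x)

/-- The Fourier coefficient `ν̂(a) = ∫ e^{2πi⟨a,x⟩} dν(x)` of a measure on the torus. -/
def fcoef {d : ℕ} (ν : Measure (Torus d)) (a : Fin d → ℤ) : ℂ :=
  ∫ x, (∏ i, fourier (a i) (x i)) ∂ν

/-- A sup-type norm of an element of `SL_d(ℤ)`. -/
def matNorm {d : ℕ} (g : SLZ d) : ℝ := ‖fun ij : Fin d × Fin d => (g.1 ij.1 ij.2 : ℝ)‖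

/-- `hasLyap μ₀ l` : the top Lyapunov exponent of `μ₀` exists and equals `l`. -/
def hasLyap {d : ℕ} (μ₀ : Measure (SLZ d)) (l : ℝ) : Prop :=
  Tendsto (fun n : ℕ => (n : ℝ)⁻¹ * ∫ g, Real.log (matNorm g) ∂(mconvPow μ₀ n)) atTop (nhds l)

/-- Strong irreducibility of the action of a set of matrices on `ℝ^d`: no nontrivial finite
union of proper nonzero subspaces is invariant. -/
def SIrredR {d : ℕ} (S : Set (SLZ d)) : Prop :=
  ¬ ∃ F : Finset (Submodule ℝ (Fin d → ℝ)), F.Nonempty ∧ (∀ W ∈ F, W ≠ ⊥ ∧ W ≠ ⊤) ∧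
      ∀ γ ∈ S, ∀ W ∈ F, W.map (Matrix.toLin' (toR γ)) ∈ F

/-- Strong irreducibility of the action of a set of matrices on `ℚ^d`. -/
def SIrredQ {d : ℕ} (S : Set (SLZ d)) : Prop :=
  ¬ ∃ F : Finset (Submodule ℚ (Fin d → ℚ)), F.Nonempty ∧ (∀ W ∈ F, W ≠ ⊥ ∧ W ≠ ⊤) ∧
      ∀ γ ∈ S, ∀ W ∈ F, W.map (Matrix.toLin' (toQ γ)) ∈ F

/-- Irreducibility of the action of a set of matrices on `ℚ^d`. -/
def IrredQ {d : ℕ} (S : Set (SLZ d)) : Prop :=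
  ¬ ∃ W : Submodule ℚ (Fin d → ℚ), W ≠ ⊥ ∧ W ≠ ⊤ ∧
      ∀ γ ∈ S, W.map (Matrix.toLin' (toQ γ)) = W

open scoped Classical in
/-- A proximal element : a simple dominant eigenvalue (over `ℂ`). -/
def IsProximal {d : ℕ} (γ : SLZ d) : Prop :=
  ∃ χ : ℂ, (Matrix.charpoly (toC γ)).roots.count χ = 1 ∧
    ∀ χ' ∈ (Matrix.charpoly (toC γ)).roots, χ' ≠ χ → ‖χ'‖ < ‖χ‖

/-- The Zariski topology on `d × d` complex matrices. -/
def zTop (d : ℕ) : TopologicalSpace (Matrix (Fin d) (Fin d) ℂ) :=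
  TopologicalSpace.generateFrom
    { U | ∃ f : MvPolynomial (Fin d × Fin d) ℂ,
        U = { M | MvPolynomial.eval (fun ij => M ij.1 ij.2) f ≠ 0 } }

/-- Zariski closure of a set of complex matrices. -/
def zclosure {d : ℕ} (S : Set (Matrix (Fin d) (Fin d) ℂ)) : Set (Matrix (Fin d) (Fin d) ℂ) :=
  @closure _ (zTop d) S

/-- The Zariski closure of (the complexification of) `S ⊆ SL_d(ℤ)` is connected. -/
def ZClosureConnected {d : ℕ} (S : Set (SLZ d)) : Prop :=
  @IsConnected _ (zTop d) (zclosure (toC '' S))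

/-- The Zariski closure of `S ⊆ SL_d(ℤ)` is semisimple: every Zariski closed and connected
subgroup which is normalized by the closure and solvable is trivial. -/
def ZClosureSemisimple {d : ℕ} (S : Set (SLZ d)) : Prop :=
  ∀ H : Subgroup (Matrix.GeneralLinearGroup (Fin d) ℂ),
    ((fun g : Matrix.GeneralLinearGroup (Fin d) ℂ => (g : Matrix (Fin d) (Fin d) ℂ)) ''
        (H : Set (Matrix.GeneralLinearGroup (Fin d) ℂ)) ⊆ zclosure (toC '' S)) →
    @IsClosed _ (zTop d) ((fun g : Matrix.GeneralLinearGroup (Fin d) ℂ =>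
        (g : Matrix (Fin d) (Fin d) ℂ)) '' (H : Set (Matrix.GeneralLinearGroup (Fin d) ℂ))) →
    @IsConnected _ (zTop d) ((fun g : Matrix.GeneralLinearGroup (Fin d) ℂ =>
        (g : Matrix (Fin d) (Fin d) ℂ)) '' (H : Set (Matrix.GeneralLinearGroup (Fin d) ℂ))) →
    (∀ g : Matrix.GeneralLinearGroup (Fin d) ℂ,
        (g : Matrix (Fin d) (Fin d) ℂ) ∈ zclosure (toC '' S) →
        ∀ h ∈ H, g * h * g⁻¹ ∈ H) →
    IsSolvable H → H = ⊥

/-- The set `𝒫_Q` of data `(u, x)` giving a trapped orbit of height at most `Q`. -/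
def PQ {d : ℕ} {Ω : Type*} (γ : Ω → SLZ d) (Q : ℝ) : Set ((Ω → Torus d) × Torus d) :=
  { p | ∃ q : ℕ, 1 ≤ q ∧ (q : ℝ) ≤ Q ∧
      ∀ ω : Ω, ∀ i : Fin d,
        q • ((AffOf.aff (⟨γ ω, p.1 ω⟩ : Aff d) p.2 - p.2) i) = 0 }

/-- `α`-energy of a measure on the torus. -/
def energy {d : ℕ} (α : ℝ) (ν : Measure (Torus d)) : ℝ≥0∞ :=
  ∫⁻ q in {q : Torus d × Torus d | q.1 ≠ q.2},
    ENNReal.ofReal ((dist q.1 q.2) ^ (-α)) ∂(ν.prod ν)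

/-- A set is `r`-separated. -/
def IsSep {X : Type*} [PseudoMetricSpace X] (r : ℝ) (S : Set X) : Prop :=
  ∀ x ∈ S, ∀ y ∈ S, x ≠ y → r ≤ dist x y

/-- Finite exponential moment. -/
def expMoment {d : ℕ} (μ₀ : Measure (SLZ d)) : Prop :=
  ∃ α > (0:ℝ), ∫⁻ g, ENNReal.ofReal ((matNorm g) ^ α) ∂μ₀ < ⊤


/-- Reduction modulo `p` of an element of `SL_d(ℤ)`. -/
def redP (p : ℕ) {d : ℕ} (γ : SLZ d) : Matrix.SpecialLinearGroup (Fin d) (ZMod p) :=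
  Matrix.SpecialLinearGroup.map (Int.castRingHom (ZMod p)) γ

/-- The random word `g(ω₁) g(ω₂) ⋯ g(ωₙ)`. -/
def word {G : Type*} [Monoid G] {Ω : Type*} (g : Ω → G) {n : ℕ} (ωs : Fin n → Ω) : G :=
  (List.ofFn fun i => g (ωs i)).prod

/-- The orbit of `x` under a set of elements of `SL_d(𝔽_p)`. -/
def orbitSet {p d : ℕ} (Γs : Set (Matrix.SpecialLinearGroup (Fin d) (ZMod p)))
    (x : Fin d → ZMod p) : Set (Fin d → ZMod p) :=
  (fun γ : Matrix.SpecialLinearGroup (Fin d) (ZMod p) => γ.1.mulVec x) '' Γs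

/-- The Dirac function at `x`. -/
def deltaF {p d : ℕ} (x : Fin d → ZMod p) : (Fin d → ZMod p) → ℝ :=
  fun y => if y = x then 1 else 0

/-- The Koopman operator `𝒜(μ)` applied to a function: `(𝒜(μ)f)(y) = ∑_g μ(g) f(g⁻¹y)`. -/
def pushStep {p d : ℕ} [NeZero p] (μ : AffP p d → ℝ) (f : (Fin d → ZMod p) → ℝ) :
    (Fin d → ZMod p) → ℝ :=
  fun y => ∑ g : AffP p d, μ g * f (AffOf.aff g⁻¹ y)

/-- `L²` norm of a real function on a finite set (counting measure). -/
def l2R {X : Type*} [Fintype X] (f : X → ℝ) : ℝ := Real.sqrt (∑ x, f x ^ 2)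

/-- `L²` norm of a complex function on a finite set (counting measure). -/
def l2C {X : Type*} [Fintype X] (f : X → ℂ) : ℝ := Real.sqrt (∑ x, ‖f x‖ ^ 2)

/-- The `L̂⁴` norm `(p^{-d} ∑_a |φ(a)|⁴)^{1/4}` on the dual of `𝔽_p^d`. -/
def hatL4 {p d : ℕ} [NeZero p] (φ : (Fin d → ZMod p) → ℝ) : ℝ :=
  ((p : ℝ) ^ (-(d : ℤ)) * ∑ a, |φ a| ^ 4) ^ ((1 : ℝ) / 4)

/-- The discrete Fourier transform `f̂(a) = ∑_x e(⟨a,x⟩) f(x)` on `𝔽_p^d`. -/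
def fhat {p d : ℕ} [NeZero p] (f : (Fin d → ZMod p) → ℝ) (a : Fin d → ZMod p) : ℂ :=
  ∑ x, Complex.exp (2 * Real.pi * Complex.I * (((∑ i, a i * x i : ZMod p).val : ℂ)) / (p : ℂ)) * f x

noncomputable instance {p d : ℕ} [NeZero p]
    (Γ : Subgroup (Matrix.SpecialLinearGroup (Fin d) (ZMod p))) : Fintype ↥Γ :=
  Fintype.ofFinite _

/-- The projection of a probability function on `SL_d(𝔽_p) ⋉ 𝔽_p^d` to `Γ`. -/
def projToGamma {p d : ℕ} [NeZero p] (Γ : Subgroup (Matrix.SpecialLinearGroup (Fin d) (ZMod p)))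
    (μ : AffP p d → ℝ) (z : ↥Γ) : ℝ :=
  ∑ v : Fin d → ZMod p, μ ⟨(z : Matrix.SpecialLinearGroup (Fin d) (ZMod p)), v⟩

/-- Spectral gap condition `‖ℒ⁰_θ(μ₀)‖ ≤ c` for the left regular representation of `Γ`
restricted to mean-zero functions. -/
def lregGap {p d : ℕ} [NeZero p] (Γ : Subgroup (Matrix.SpecialLinearGroup (Fin d) (ZMod p)))
    (μ₀ : ↥Γ → ℝ) (c : ℝ) : Prop :=
  ∀ f : ↥Γ → ℂ, (∑ z : ↥Γ, f z) = 0 →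
    l2C (fun z : ↥Γ => ∑ w : ↥Γ, (μ₀ w : ℂ) * f (w⁻¹ * z)) ≤ c * l2C f

end

noncomputable section


noncomputable section

lemma smul_apply' {d : ℕ} (γ : SLZ d) (y : Torus d) (i : Fin d) :
    (γ • y) i = ∑ j, (γ.1 i j) • y j := rfl

lemma projT_add {d : ℕ} (v w : Fin d → ℝ) : projT (v + w) = projT v + projT w := by
  funext i; exact (QuotientAddGroup.mk' _).map_add _ _

lemma projT_smul {d : ℕ} (γ : SLZ d) (v : Fin d → ℝ) :
    projT (γ • v) = γ • projT v := by
  funext i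
  show ((((toR γ).mulVec v) i : ℝ) : AddCircle (1:ℝ)) = ∑ j, (γ.1 i j) • ((v j : ℝ) : AddCircle (1:ℝ))
  rw [Matrix.mulVec, dotProduct]
  rw [show ((∑ j, toR γ i j * v j : ℝ) : AddCircle (1:ℝ))
      = ∑ j, ((toR γ i j * v j : ℝ) : AddCircle (1:ℝ)) from map_sum (QuotientAddGroup.mk' _) _ _]
  refine Finset.sum_congr rfl fun j _ => ?_
  rw [show (toR γ i j * v j : ℝ) = (γ.1 i j) • (v j) by simp [toR, zsmul_eq_mul]]
  exact ((QuotientAddGroup.mk' _) : ℝ →+ AddCircle (1:ℝ)).map_zsmul _ _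

lemma affRT_mul {d : ℕ} (g h : AffR d) (x : Torus d) :
    affRT (g * h) x = affRT g (affRT h x) := by
  unfold affRT
  simp only [AffOf.mul_lin, AffOf.mul_trans, projT_add, projT_smul, mul_smul, smul_add]
  abel

lemma affRT_one {d : ℕ} (x : Torus d) : affRT 1 x = x := by
  unfold affRT
  simp only [AffOf.one_lin, AffOf.one_trans, one_smul]
  have : projT (0 : Fin d → ℝ) = 0 := by funext i; rfl
  rw [this, add_zero]

lemma affRT_add {d : ℕ} (g : AffR d) (x τ : Torus d) :
    affRT g (x + τ) = affRT g x + g.lin • τ := by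
  unfold affRT
  rw [smul_add]; abel

end


noncomputable section

lemma finite_qtors (q : ℕ) (hq : 1 ≤ q) : {z : AddCircle (1:ℝ) | q • z = 0}.Finite := by
  have hsub : {z : AddCircle (1:ℝ) | q • z = 0} ⊆
      ⋃ n ∈ q.divisors, {z : AddCircle (1:ℝ) | addOrderOf z = n} := by
    intro z hz
    have hd : addOrderOf z ∣ q := addOrderOf_dvd_of_nsmul_eq_zero hz
    have hpos : 0 < addOrderOf z := by
      have : IsOfFinAddOrder z := by
        refine isOfFinAddOrder_iff_nsmul_eq_zero.2 ⟨q, hq, hz⟩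
      exact this.addOrderOf_pos
    exact Set.mem_biUnion (Nat.mem_divisors.2 ⟨hd, by omega⟩) rfl
  refine Set.Finite.subset ?_ hsub
  refine Set.Finite.biUnion (Set.finite_mem_finset q.divisors) fun n hn => ?_
  exact AddCircle.finite_setOfPred_addOrderOf_eq (p := (1:ℝ)) (Nat.pos_of_mem_divisors hn)

def Tset (d q : ℕ) : Set (Torus d) := {y | ∀ i, q • y i = 0}

lemma Tset_finite {d : ℕ} (q : ℕ) (hq : 1 ≤ q) : (Tset d q).Finite := by
  have : Tset d q ⊆ Set.pi Set.univ (fun _ : Fin d => {z : AddCircle (1:ℝ) | q • z = 0}) := by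
    intro y hy i _; exact hy i
  exact Set.Finite.subset (Set.Finite.pi fun _ => finite_qtors q hq) this

lemma Tset_add {d q : ℕ} {y z : Torus d} (hy : y ∈ Tset d q) (hz : z ∈ Tset d q) :
    y + z ∈ Tset d q := fun i => by
  show q • (y i + z i) = 0
  rw [smul_add, hy i, hz i, add_zero]

lemma Tset_neg {d q : ℕ} {y : Torus d} (hy : y ∈ Tset d q) : -y ∈ Tset d q := fun i => by
  show q • (-(y i)) = 0
  rw [smul_neg, hy i, neg_zero]

lemma Tset_zero {d q : ℕ} : (0 : Torus d) ∈ Tset d q := fun i => smul_zero q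

lemma Tset_smul {d q : ℕ} (γ : SLZ d) {y : Torus d} (hy : y ∈ Tset d q) :
    γ • y ∈ Tset d q := fun i => by
  rw [smul_apply', Finset.smul_sum]
  refine Finset.sum_eq_zero fun j _ => ?_
  rw [smul_comm, hy j, smul_zero]

/-- The set of `g` with `affRT g x - x ∈ Tset d q` is a subgroup. -/
def Ksub {d : ℕ} (x : Torus d) (q : ℕ) : Subgroup (AffR d) where
  carrier := {g | affRT g x - x ∈ Tset d q}
  one_mem' := by
    show affRT 1 x - x ∈ Tset d q
    rw [affRT_one, sub_self]; exact Tset_zero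
  mul_mem' := by
    intro g h hg hh
    show affRT (g * h) x - x ∈ Tset d q
    rw [affRT_mul]
    have : affRT h x = x + (affRT h x - x) := by abel
    rw [this, affRT_add]
    have : affRT g x + g.lin • (affRT h x - x) - x
        = (affRT g x - x) + g.lin • (affRT h x - x) := by abel
    rw [this]
    exact Tset_add hg (Tset_smul _ hh)
  inv_mem' := by
    intro g hg
    show affRT g⁻¹ x - x ∈ Tset d q
    have h1 : affRT g⁻¹ (affRT g x) = x := by rw [← affRT_mul, inv_mul_cancel, affRT_one]
    have h2 : affRT g x = x + (affRT g x - x) := by abel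
    rw [h2, affRT_add] at h1
    have h3 : affRT g⁻¹ x = x - g⁻¹.lin • (affRT g x - x) := eq_sub_of_add_eq h1
    have h4 : affRT g⁻¹ x - x = -(g⁻¹.lin • (affRT g x - x)) := by rw [h3]; abel
    rw [h4]
    exact Tset_neg (Tset_smul _ hg)

end


noncomputable section

/-- A ℚ-linear functional-ish map on ℝ vanishing exactly on ℚ, descending to the circle. -/
lemma exists_phi : ∃ φ : AddCircle (1:ℝ) →+ ℝ,
    (∀ a : AddCircle (1:ℝ), φ a = 0 → ∃ m : ℕ, 1 ≤ m ∧ m • a = 0) := by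
  classical
  set K : Submodule ℚ ℝ := Submodule.span ℚ {(1:ℝ)} with hK
  obtain ⟨C, hC⟩ := Submodule.exists_isCompl K
  set prj : ℝ →ₗ[ℚ] ℝ := C.subtype.comp (Submodule.linearProjOfIsCompl C K hC.symm) with hprj
  have hker : ∀ r : ℝ, prj r = 0 ↔ r ∈ K := by
    intro r
    constructor
    · intro h
      have : Submodule.linearProjOfIsCompl C K hC.symm r = 0 :=
        Subtype.coe_injective (h : ((Submodule.linearProjOfIsCompl C K hC.symm r : C) : ℝ) = ((0 : C) : ℝ))
      exact (Submodule.linearProjOfIsCompl_apply_eq_zero_iff hC.symm).1 this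
    · intro h
      simp only [hprj, LinearMap.comp_apply]
      rw [Submodule.linearProjOfIsCompl, Submodule.projectionOnto_apply_of_mem_right hC.symm h]
      rfl
  have hmult : ∀ r : ℝ, r ∈ AddSubgroup.zmultiples (1:ℝ) → prj.toAddMonoidHom r = 0 := by
    intro r hr
    obtain ⟨n, rfl⟩ := hr
    refine (hker _).2 ?_
    refine Submodule.mem_span_singleton.2 ⟨(n:ℚ), ?_⟩
    show (n:ℚ) • (1:ℝ) = n • (1:ℝ)
    rw [Rat.smul_one_eq_cast, zsmul_eq_mul, mul_one]
    push_cast; ring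
  refine ⟨QuotientAddGroup.lift (AddSubgroup.zmultiples (1:ℝ)) prj.toAddMonoidHom hmult, ?_⟩
  intro a ha
  obtain ⟨r, rfl⟩ := QuotientAddGroup.mk_surjective a
  have hr : prj r = 0 := ha
  have hrK : r ∈ K := (hker r).1 hr
  rw [hK, Submodule.mem_span_singleton] at hrK
  obtain ⟨c, hc⟩ := hrK
  refine ⟨c.den, c.pos, ?_⟩
  have : (c.den : ℕ) • ((r : ℝ) : AddCircle (1:ℝ)) = ((c.den • r : ℝ) : AddCircle (1:ℝ)) := by
    rw [← AddCircle.coe_nsmul]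
  rw [this, AddCircle.coe_eq_zero_iff]
  have hrc : r = (c : ℝ) := by rw [← hc, Rat.smul_one_eq_cast]
  refine ⟨c.num, ?_⟩
  rw [zsmul_eq_mul, mul_one, nsmul_eq_mul, hrc]
  have hh : ((c.den : ℚ) * c) = (c.num : ℚ) := by rw [mul_comm, Rat.mul_den_eq_num]
  exact_mod_cast hh.symm


noncomputable section

lemma slz_eq_one_of_d_le_one {d : ℕ} (hd : d ≤ 1) (γ : SLZ d) : γ = 1 := by
  ext i j
  interval_cases d
  · exact absurd i.2 (by omega)
  · have h0 : i = 0 := Subsingleton.elim _ _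
    have h1 : j = 0 := Subsingleton.elim _ _
    subst h0; subst h1
    have hdet := γ.2
    rw [Matrix.det_fin_one] at hdet
    simp [hdet, Matrix.one_apply]

lemma smul_real_eq {d : ℕ} (γ : SLZ d) (v : Fin d → ℝ) :
    γ • v = Matrix.toLin' (toR γ) v := by
  rw [Matrix.toLin'_apply]; rfl

lemma smul_real_inj {d : ℕ} (γ : SLZ d) {v : Fin d → ℝ} (h : γ • v = 0) : v = 0 := by
  have := congrArg (fun w => γ⁻¹ • w) h
  simpa [← mul_smul] using this

/-- If the linear `Γ`-orbit of `w` is finite and `Γ` is strongly irreducible with `d ≥ 2`,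
then `w = 0`. -/
lemma fixed_vector_zero {d : ℕ} (hd : 2 ≤ d) (Γ : Subgroup (SLZ d))
    (hirr : SIrredR (Γ : Set (SLZ d))) (w : Fin d → ℝ)
    (hfin : Set.Finite ((fun γ : SLZ d => γ • w) '' (Γ : Set (SLZ d)))) : w = 0 := by
  by_contra hw
  apply hirr
  classical
  refine ⟨hfin.toFinset.image (fun z => Submodule.span ℝ {z}), ?_, ?_, ?_⟩
  · refine ⟨Submodule.span ℝ {w}, Finset.mem_image_of_mem _ ?_⟩
    rw [Set.Finite.mem_toFinset]
    exact ⟨1, Γ.one_mem, one_smul _ _⟩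
  · intro W hW
    rw [Finset.mem_image] at hW
    obtain ⟨z, hz, rfl⟩ := hW
    rw [Set.Finite.mem_toFinset] at hz
    obtain ⟨γ, hγ, rfl⟩ := hz
    have hz0 : γ • w ≠ 0 := fun h => hw (smul_real_inj γ h)
    constructor
    · rwa [ne_eq, Submodule.span_singleton_eq_bot]
    · intro htop
      have h1 : Module.finrank ℝ (Submodule.span ℝ {γ • w}) = 1 :=
        finrank_span_singleton hz0
      rw [htop] at h1
      rw [finrank_top, Module.finrank_fin_fun] at h1
      omega
  · intro γ hγ W hW
    rw [Finset.mem_image] at hW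
    obtain ⟨z, hz, rfl⟩ := hW
    rw [Set.Finite.mem_toFinset] at hz
    obtain ⟨γ', hγ', rfl⟩ := hz
    rw [Submodule.map_span, Set.image_singleton, ← smul_real_eq, ← mul_smul]
    refine Finset.mem_image_of_mem _ ?_
    rw [Set.Finite.mem_toFinset]
    exact ⟨γ * γ', Γ.mul_mem hγ hγ', rfl⟩

lemma phi_equivariant (φ : AddCircle (1:ℝ) →+ ℝ) {d : ℕ} (γ : SLZ d) (y : Torus d) :
    (fun i => φ ((γ • y) i)) = γ • (fun i => φ (y i)) := by
  funext i
  show φ (∑ j, γ.1 i j • y j) = ((toR γ).mulVec fun j => φ (y j)) i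
  rw [map_sum, Matrix.mulVec, dotProduct]
  refine Finset.sum_congr rfl fun j _ => ?_
  rw [map_zsmul]
  show γ.1 i j • φ (y j) = toR γ i j * φ (y j)
  simp [toR, zsmul_eq_mul]


end

/-- **Lemma (characterization of finite orbits).** -/
theorem finite_orbit_characterization
    {d : ℕ}
    (H : Subgroup (AffR d)) (S : Set (AffR d)) (hS : Subgroup.closure S = H)
    (Γ : Subgroup (SLZ d)) (hΓ : Γ = H.map AffOf.linHom)
    (hirr : SIrredR (Γ : Set (SLZ d)))
    (x : Torus d) :
    (Set.Finite ((fun g : AffR d => affRT g x) '' (H : Set (AffR d))) ↔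
      ∃ q : ℕ, 1 ≤ q ∧ ∀ g ∈ H, ∀ i : Fin d, q • ((affRT g x - x) i) = 0)
    ∧ ((∃ q : ℕ, 1 ≤ q ∧ ∀ g ∈ S, ∀ i : Fin d, q • ((affRT g x - x) i) = 0) ↔
      ∃ q : ℕ, 1 ≤ q ∧ ∀ g ∈ H, ∀ i : Fin d, q • ((affRT g x - x) i) = 0) := by
  classical
  have hSH : S ⊆ (H : Set (AffR d)) := by
    intro g hg; rw [← hS]; exact Subgroup.subset_closure hg
  constructor
  · constructor
    · -- (1) ⇒ (3)
      intro hfin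
      set O : Finset (Torus d) := hfin.toFinset with hO
      have hmemO : ∀ g ∈ H, affRT g x ∈ O := by
        intro g hg; rw [hO, Set.Finite.mem_toFinset]; exact ⟨g, hg, rfl⟩
      have hOmem : ∀ y ∈ O, ∃ g ∈ H, affRT g x = y := by
        intro y hy; rw [hO, Set.Finite.mem_toFinset] at hy; exact hy
      have hxO : x ∈ O := by
        have := hmemO 1 H.one_mem; rwa [affRT_one] at this
      set N : ℕ := O.card with hN
      have hN1 : 1 ≤ N := Finset.card_pos.2 ⟨x, hxO⟩
      set s : Torus d := ∑ y ∈ O, y with hs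
      set t : Torus d := N • x - s with ht
      have hperm : ∀ g ∈ H, ∑ y ∈ O, affRT g y = s := by
        intro g hg
        rw [hs]
        refine Finset.sum_nbij' (i := fun y => affRT g y) (j := fun y => affRT g⁻¹ y)
          ?_ ?_ ?_ ?_ ?_
        · intro y hy
          obtain ⟨h, hh, rfl⟩ := hOmem y hy
          show affRT g (affRT h x) ∈ O
          rw [← affRT_mul]
          exact hmemO _ (H.mul_mem hg hh)
        · intro y hy
          obtain ⟨h, hh, rfl⟩ := hOmem y hy
          show affRT g⁻¹ (affRT h x) ∈ O
          rw [← affRT_mul]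
          exact hmemO _ (H.mul_mem (H.inv_mem hg) hh)
        · intro y _
          show affRT g⁻¹ (affRT g y) = y
          rw [← affRT_mul, inv_mul_cancel, affRT_one]
        · intro y _
          show affRT g (affRT g⁻¹ y) = y
          rw [← affRT_mul, mul_inv_cancel, affRT_one]
        · intro y _; rfl
      have hkey : ∀ g ∈ H, N • (affRT g x - x) = g.lin • t - t := by
        intro g hg
        have h2 : ∑ y ∈ O, affRT g y = g.lin • s + N • projT g.trans := by
          unfold affRT
          rw [Finset.sum_add_distrib, Finset.sum_const, ← Finset.smul_sum, ← hs, ← hN]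
        have h3 : g.lin • s + N • projT g.trans = s := by rw [← h2]; exact hperm g hg
        have hNu : N • projT g.trans = s - g.lin • s := eq_sub_of_add_eq' h3
        have h4 : N • affRT g x = g.lin • (N • x) + N • projT g.trans := by
          show N • (g.lin • x + projT g.trans) = _
          rw [smul_add]
          congr 1
          exact ((DistribMulAction.toAddMonoidHom (Torus d) g.lin).map_nsmul N x).symm
        calc N • (affRT g x - x)
            = N • affRT g x - N • x := smul_sub N _ _
          _ = g.lin • (N • x) + (s - g.lin • s) - N • x := by rw [h4, hNu]
          _ = g.lin • (N • x) - g.lin • s - (N • x - s) := by abel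
          _ = g.lin • (N • x - s) - (N • x - s) := by rw [smul_sub]
          _ = g.lin • t - t := by rw [← ht]
      have hΓt : Set.Finite ((fun γ : SLZ d => γ • t) '' (Γ : Set (SLZ d))) := by
        refine Set.Finite.subset ((O.finite_toSet).image (fun y => t + N • (y - x))) ?_
        rintro - ⟨γ, hγ, rfl⟩
        rw [hΓ] at hγ
        obtain ⟨g, hg, rfl⟩ := hγ
        refine ⟨affRT g x, hmemO g hg, ?_⟩
        show t + N • (affRT g x - x) = AffOf.linHom g • t
        rw [hkey g hg]
        show t + ((g.lin) • t - t) = g.lin • t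
        abel
      obtain ⟨φ, hφ⟩ := exists_phi
      set w : Fin d → ℝ := fun i => φ (t i) with hw
      have hglin : ∃ m : ℕ, 1 ≤ m ∧ ∀ γ ∈ Γ, ∀ i : Fin d, m • ((γ • t - t) i) = 0 := by
        rcases le_or_gt d 1 with hd | hd
        · refine ⟨1, le_refl 1, ?_⟩
          intro γ hγ i
          rw [slz_eq_one_of_d_le_one hd γ]
          rw [show (1 : SLZ d) • t = t from one_smul _ t, sub_self]
          simp
        · -- d ≥ 2
          have hwfin : Set.Finite ((fun γ : SLZ d => γ • w) '' (Γ : Set (SLZ d))) := by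
            refine Set.Finite.subset (hΓt.image (fun y => fun i => φ (y i))) ?_
            rintro - ⟨γ, hγ, rfl⟩
            exact ⟨γ • t, ⟨γ, hγ, rfl⟩, phi_equivariant φ γ t⟩
          have hw0 : w = 0 := fixed_vector_zero hd Γ hirr w hwfin
          have htor : ∀ i : Fin d, ∃ m : ℕ, 1 ≤ m ∧ m • t i = 0 := by
            intro i
            exact hφ (t i) (congrFun hw0 i)
          choose m hm1 hm2 using htor
          refine ⟨∏ i, m i, Finset.one_le_prod' (fun i _ => hm1 i), ?_⟩
          have hmt : ∀ i : Fin d, (∏ j, m j) • t i = 0 := by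
            intro i
            obtain ⟨c, hc⟩ := Finset.dvd_prod_of_mem m (Finset.mem_univ i)
            rw [hc, mul_comm, mul_smul, hm2 i, smul_zero]
          intro γ hγ i
          have hcomp : (γ • t - t) i = (∑ j, γ.1 i j • t j) - t i := rfl
          rw [hcomp, smul_sub, hmt i, sub_zero, Finset.smul_sum]
          refine Finset.sum_eq_zero fun j _ => ?_
          rw [smul_comm, hmt j, smul_zero]
      obtain ⟨m, hm1, hm⟩ := hglin
      refine ⟨N * m, Nat.one_le_iff_ne_zero.2 (by positivity), ?_⟩
      intro g hg i
      have hγΓ : g.lin ∈ Γ := by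
        rw [hΓ]; exact ⟨g, hg, rfl⟩
      have hki : N • ((affRT g x - x) i) = (g.lin • t - t) i := congrFun (hkey g hg) i
      calc (N * m) • ((affRT g x - x) i)
          = m • (N • ((affRT g x - x) i)) := by rw [mul_comm, mul_smul]
        _ = m • ((g.lin • t - t) i) := by rw [hki]
        _ = 0 := hm g.lin hγΓ i
    · -- (3) ⇒ (1)
      rintro ⟨q, hq, hqH⟩
      refine Set.Finite.subset ((Tset_finite (d := d) q hq).image (fun τ => x + τ)) ?_
      rintro - ⟨g, hg, rfl⟩
      exact ⟨affRT g x - x, fun i => hqH g hg i, by simp⟩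
  · constructor
    · rintro ⟨q, hq, hqS⟩
      refine ⟨q, hq, ?_⟩
      have hle : H ≤ Ksub x q := by
        rw [← hS]
        exact (Subgroup.closure_le _).2 (fun g hg => (hqS g hg : ∀ i, _))
      intro g hg i
      exact (hle hg : affRT g x - x ∈ Tset d q) i
    · rintro ⟨q, hq, hqH⟩
      exact ⟨q, hq, fun g hg => hqH g (hSH hg)⟩
end
end
end

section
/- Let r > 0 and let ν be a Borel probability measure on 𝕋^d satisfying max_{z ∈ 𝕋^d} ν(B(z,r)) ≤ s for some s > 0. Given a measurable function f : 𝕋^d → [0,1], there exists a probability measure ν' on 𝕋^d whose support is r-separated (hence finite) such that ∫ f dν' ≥ 2^{-d} ∫ f dν and (ν' ⊗ ν')(Δ) ≤ 2^d s / ∫ f dν. -/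
set_option synthInstance.maxHeartbeats 1000000
set_option maxHeartbeats 1000000
set_option linter.unusedSectionVars false

open MeasureTheory Matrix Filter Metric
open scoped BigOperators ENNReal Real

section AuxDecomp
open MeasureTheory Metric

lemma norm_coe_circle_eq (x : ℝ) : ‖(x : AddCircle (1:ℝ))‖ = |x - round x| := by
  rw [AddCircle.norm_eq]; simp

lemma norm_coe_circle_le (x : ℝ) : ‖(x : AddCircle (1:ℝ))‖ ≤ |x| := by
  rw [norm_coe_circle_eq]
  simpa using round_le x 0

lemma sep_coord {n : ℕ} (hn : 0 < n) (hne : Even n) {a b : ℕ} (ha : a < n) (hb : b < n)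
    (hab : a ≠ b) (hpar : a % 2 = b % 2) {u v : ℝ}
    (hu1 : (a:ℝ) ≤ n * u) (hu2 : (n:ℝ) * u < a + 1)
    (hv1 : (b:ℝ) ≤ n * v) (hv2 : (n:ℝ) * v < b + 1) :
    1/(n:ℝ) ≤ ‖((u - v : ℝ) : AddCircle (1:ℝ))‖ := by
  have hnR : (0:ℝ) < n := by exact_mod_cast hn
  rw [norm_coe_circle_eq]
  set z : ℤ := round (u - v) with hz
  have hkey : (2:ℝ) ≤ |((a:ℝ) - b) - n * z| := by
    set c : ℤ := ((a:ℤ) - b) - n * z with hc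
    have hdvd : (2:ℤ) ∣ c := by
      obtain ⟨m, hm⟩ := hne
      have h1 : (2:ℤ) ∣ ((a:ℤ) - b) := by omega
      have h2 : (2:ℤ) ∣ (n:ℤ) * z := ⟨m * z, by push_cast [hm]; ring⟩
      exact dvd_sub h1 h2
    have hc0 : c ≠ 0 := by
      intro h0
      rw [hc, sub_eq_zero] at h0
      have habs : |((a:ℤ) - b)| < (n:ℤ) := by
        rw [abs_lt]; constructor <;> omega
      have := Int.eq_zero_of_abs_lt_dvd ⟨z, h0⟩ habs
      omega
    have h2le : (2:ℤ) ≤ |c| := by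
      obtain ⟨e, he⟩ := hdvd
      have he0 : e ≠ 0 := by rintro rfl; rw [mul_zero] at he; exact hc0 he
      have h1e := Int.one_le_abs he0
      rw [he, abs_mul, abs_two]
      linarith
    have : ((a:ℝ) - b) - n * z = (c:ℝ) := by push_cast [hc]; ring
    rw [this, ← Int.cast_abs]
    exact_mod_cast h2le
  have hclose : |(n:ℝ)*(u - v) - ((a:ℝ) - b)| < 1 := by
    have he : (n:ℝ)*(u-v) - ((a:ℝ)-b) = ((n:ℝ)*u - a) - ((n:ℝ)*v - b) := by ring
    rw [he, abs_lt]
    constructor <;> linarith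
  have h3 : 1 ≤ |(n:ℝ)*(u-v) - n*z| := by
    have htri : |((a:ℝ) - b) - n*z| ≤ |(n:ℝ)*(u-v) - n*z| + |(n:ℝ)*(u - v) - ((a:ℝ) - b)| := by
      have : ((a:ℝ) - b) - n*z = ((n:ℝ)*(u-v) - n*z) - ((n:ℝ)*(u-v) - ((a:ℝ) - b)) := by ring
      rw [this]
      exact abs_sub _ _
    linarith
  have h4 : |(n:ℝ)*(u-v) - n*z| = n * |(u-v) - z| := by
    rw [show (n:ℝ)*(u-v) - n*z = n * ((u-v) - z) by ring, abs_mul, abs_of_pos hnR]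
  rw [h4] at h3
  rw [div_le_iff₀ hnR]
  linarith [h3]

lemma ball_coord {n : ℕ} (hn : 0 < n) {a : ℕ} {u : ℝ}
    (hu1 : (a:ℝ) ≤ n*u) (hu2 : (n:ℝ)*u < a+1) :
    ‖((u - ((a:ℝ)+2⁻¹)/n : ℝ) : AddCircle (1:ℝ))‖ ≤ 1/(2*n) := by
  have hnR : (0:ℝ) < n := by exact_mod_cast hn
  refine (norm_coe_circle_le _).trans ?_
  have e1 : (a:ℝ)/n ≤ u := (div_le_iff₀ hnR).mpr (by linarith)
  have e2 : u ≤ ((a:ℝ)+1)/n := (le_div_iff₀ hnR).mpr (by linarith)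
  have e3 : ((a:ℝ)+2⁻¹)/n - (a:ℝ)/n = 1/(2*n) := by field_simp; ring
  have e4 : ((a:ℝ)+1)/n - ((a:ℝ)+2⁻¹)/n = 1/(2*n) := by field_simp; ring
  rw [abs_le]; constructor <;> linarith


lemma aux_decomp {d : ℕ} {κ : Type} [Fintype κ] [DecidableEq κ]
    {r s β : ℝ} (hr : 0 < r) (hβ : 0 < β)
    (ν : Measure (Torus d)) [IsProbabilityMeasure ν]
    (f : Torus d → ℝ) (hf : Measurable f) (hf01 : ∀ x, f x ∈ Set.Icc (0:ℝ) 1)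
    (hI : 0 < ∫ x, f x ∂ν)
    (cell : κ → Set (Torus d)) (hm : ∀ k, MeasurableSet (cell k))
    (C : Finset κ)
    (hsmall : ∀ k ∈ C, ν (cell k) ≤ ENNReal.ofReal s)
    (hsep : ∀ k ∈ C, ∀ k' ∈ C, k ≠ k' → ∀ x ∈ cell k, ∀ y ∈ cell k', r ≤ dist x y)
    (hA : β * ∫ x, f x ∂ν ≤ ∑ k ∈ C, ∫ x in cell k, f x ∂ν) :
    ∃ ν' : Measure (Torus d), IsProbabilityMeasure ν' ∧
      (∃ T : Finset (Torus d),
        ν' ((↑T : Set (Torus d))ᶜ) = 0 ∧ IsSep r (↑T : Set (Torus d))) ∧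
      β * ∫ x, f x ∂ν ≤ ∫ x, f x ∂ν' ∧
      (ν'.prod ν') {q : Torus d × Torus d | q.1 = q.2} ≤
        ENNReal.ofReal s / ENNReal.ofReal (β * ∫ x, f x ∂ν) := by
  classical
  set I := ∫ x, f x ∂ν with hIdef
  have hfint : ∀ (μ : Measure (Torus d)) [IsFiniteMeasure μ], Integrable f μ := by
    intro μ _
    refine (integrable_const (1:ℝ)).mono' hf.aestronglyMeasurable (ae_of_all _ fun x => ?_)
    rw [Real.norm_eq_abs, abs_of_nonneg (hf01 x).1]; exact (hf01 x).2
  set C' : Finset κ := C.filter (fun k => ν (cell k) ≠ 0) with hC'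
  have hC'sub : ∀ k ∈ C', k ∈ C := fun k hk => Finset.mem_of_mem_filter _ hk
  have hC'ne : ∀ k ∈ C', ν (cell k) ≠ 0 := fun k hk => (Finset.mem_filter.mp hk).2
  have hpt : ∀ k : κ, ∃ x : Torus d, k ∈ C' → x ∈ cell k ∧
      (ν (cell k)).toReal⁻¹ * ∫ y in cell k, f y ∂ν ≤ f x := by
    intro k
    by_cases hk : k ∈ C'
    · obtain ⟨x, hx, hle⟩ := exists_setAverage_le (hC'ne k hk) (measure_ne_top ν _)
        (hfint ν).integrableOn
      rw [setAverage_eq, smul_eq_mul] at hle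
      exact ⟨x, fun _ => ⟨hx, hle⟩⟩
    · exact ⟨Classical.arbitrary _, fun h => absurd h hk⟩
  choose t ht using hpt
  have htmem : ∀ k ∈ C', t k ∈ cell k := fun k hk => (ht k hk).1
  have htavg : ∀ k ∈ C', (ν (cell k)).toReal⁻¹ * ∫ y in cell k, f y ∂ν ≤ f (t k) :=
    fun k hk => (ht k hk).2
  set N : ℝ≥0∞ := ∑ k ∈ C', ν (cell k) with hN
  have hdisj : (↑C' : Set κ).PairwiseDisjoint cell := by
    intro k hk k' hk' hne
    rw [Function.onFun, Set.disjoint_left]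
    intro x hxk hxk'
    have := hsep k (hC'sub k hk) k' (hC'sub k' hk') hne x hxk x hxk'
    rw [dist_self] at this; linarith
  have hN1 : N ≤ 1 := by
    rw [hN, ← measure_biUnion_finset hdisj (fun k _ => hm k)]
    exact prob_le_one
  have hNtop : N ≠ ⊤ := (lt_of_le_of_lt hN1 ENNReal.one_lt_top).ne
  have ha_nonneg : ∀ k : κ, 0 ≤ ∫ y in cell k, f y ∂ν := fun k =>
    setIntegral_nonneg (hm k) (fun x _ => (hf01 x).1)
  have hsum_eq : ∑ k ∈ C', ∫ y in cell k, f y ∂ν = ∑ k ∈ C, ∫ y in cell k, f y ∂ν := by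
    rw [hC']
    refine Finset.sum_filter_of_ne fun k _ hne h0 => hne ?_
    rw [Measure.restrict_eq_zero.mpr h0, integral_zero_measure]
  have hAN : β * I ≤ N.toReal := by
    have h1 : ∀ k ∈ C', ∫ y in cell k, f y ∂ν ≤ (ν (cell k)).toReal := by
      intro k _
      calc ∫ y in cell k, f y ∂ν ≤ ∫ _ in cell k, (1:ℝ) ∂ν :=
            integral_mono (hfint ν).integrableOn (integrable_const 1) (fun x => (hf01 x).2)
        _ = (ν (cell k)).toReal := by simp; rfl
    calc β * I ≤ ∑ k ∈ C, ∫ y in cell k, f y ∂ν := hA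
      _ = ∑ k ∈ C', ∫ y in cell k, f y ∂ν := hsum_eq.symm
      _ ≤ ∑ k ∈ C', (ν (cell k)).toReal := Finset.sum_le_sum h1
      _ = N.toReal := (ENNReal.toReal_sum (fun k _ => measure_ne_top ν _)).symm
  have hβI : 0 < β * I := mul_pos hβ hI
  have hN0 : N ≠ 0 := by
    intro h0
    rw [h0, ENNReal.toReal_zero] at hAN
    linarith
  have hNt_pos : 0 < N.toReal := ENNReal.toReal_pos hN0 hNtop
  have hNt_le1 : N.toReal ≤ 1 := by
    have h := ENNReal.toReal_mono (by simp : (1:ℝ≥0∞) ≠ ⊤) hN1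
    simpa using h
  set w : κ → ℝ≥0∞ := fun k => ν (cell k) / N with hw
  have hwtop : ∀ k, w k ≠ ⊤ := fun k => (ENNReal.div_lt_top (measure_ne_top ν _) hN0).ne
  set ν' : Measure (Torus d) := ∑ k ∈ C', w k • Measure.dirac (t k) with hν'
  have hν'apply : ∀ (u : Set (Torus d)), MeasurableSet u →
      ν' u = ∑ k ∈ C', w k * Set.indicator u 1 (t k) := by
    intro u hu
    rw [hν', Measure.finset_sum_apply]
    refine Finset.sum_congr rfl fun k _ => ?_
    rw [Measure.smul_apply, Measure.dirac_apply' _ hu, smul_eq_mul]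
  have hprob : IsProbabilityMeasure ν' := by
    constructor
    rw [hν'apply _ MeasurableSet.univ]
    simp only [Set.indicator_univ, Pi.one_apply, mul_one]
    simp only [hw, div_eq_mul_inv]
    rw [← Finset.sum_mul, ← hN, ← div_eq_mul_inv]
    exact ENNReal.div_self hN0 hNtop
  have hint' : ∫ x, f x ∂ν' = ∑ k ∈ C', (w k).toReal * f (t k) := by
    rw [hν', integral_finset_sum_measure (fun k _ => ((hfint _).smul_measure (hwtop k)))]
    refine Finset.sum_congr rfl fun k _ => ?_
    rw [integral_smul_measure, integral_dirac' _ _ hf.stronglyMeasurable, smul_eq_mul]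
  have hstep : ∀ k ∈ C', (∫ y in cell k, f y ∂ν) / N.toReal ≤ (w k).toReal * f (t k) := by
    intro k hk
    have hm0 : 0 < (ν (cell k)).toReal :=
      ENNReal.toReal_pos (hC'ne k hk) (measure_ne_top _ _)
    have hwk : (w k).toReal = (ν (cell k)).toReal / N.toReal := by
      rw [hw, ENNReal.toReal_div]
    have h1 : ∫ y in cell k, f y ∂ν ≤ (ν (cell k)).toReal * f (t k) := by
      have h := htavg k hk
      rwa [inv_mul_le_iff₀ hm0] at h
    have h2 : (∫ y in cell k, f y ∂ν) / N.toReal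
        ≤ ((ν (cell k)).toReal * f (t k)) / N.toReal := by gcongr
    refine h2.trans_eq ?_
    rw [hwk]; ring
  have hlow : β * I ≤ ∫ x, f x ∂ν' := by
    rw [hint']
    have hApos : 0 ≤ ∑ k ∈ C', ∫ y in cell k, f y ∂ν :=
      Finset.sum_nonneg fun k _ => ha_nonneg k
    have h3 : β * I ≤ (∑ k ∈ C', ∫ y in cell k, f y ∂ν) / N.toReal := by
      have : β * I ≤ ∑ k ∈ C', ∫ y in cell k, f y ∂ν := hsum_eq ▸ hA
      rw [le_div_iff₀ hNt_pos]
      nlinarith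
    calc β * I ≤ (∑ k ∈ C', ∫ y in cell k, f y ∂ν) / N.toReal := h3
      _ = ∑ k ∈ C', (∫ y in cell k, f y ∂ν) / N.toReal := Finset.sum_div _ _ _
      _ ≤ ∑ k ∈ C', (w k).toReal * f (t k) := Finset.sum_le_sum hstep
  set T : Finset (Torus d) := C'.image t with hT
  have hTc : ν' ((↑T : Set (Torus d))ᶜ) = 0 := by
    rw [hν'apply _ ((↑T : Set (Torus d)).toFinite.measurableSet).compl]
    refine Finset.sum_eq_zero fun k hk => ?_
    rw [Set.indicator_of_notMem (by
      simp only [Set.mem_compl_iff, not_not, Finset.mem_coe]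
      exact Finset.mem_image_of_mem t hk), mul_zero]
  have hTsep : IsSep r (↑T : Set (Torus d)) := by
    intro x hx y hy hxy
    obtain ⟨k, hk, rfl⟩ := Finset.mem_image.mp (Finset.mem_coe.mp hx)
    obtain ⟨k', hk', rfl⟩ := Finset.mem_image.mp (Finset.mem_coe.mp hy)
    have hkk' : k ≠ k' := fun h => hxy (by rw [h])
    exact hsep k (hC'sub k hk) k' (hC'sub k' hk') hkk' _ (htmem k hk) _ (htmem k' hk')
  haveI := hprob
  have hDm : MeasurableSet {q : Torus d × Torus d | q.1 = q.2} :=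
    measurableSet_eq_fun measurable_fst measurable_snd
  have hdiag : (ν'.prod ν') {q : Torus d × Torus d | q.1 = q.2} ≤ ENNReal.ofReal s / N := by
    rw [Measure.prod_apply hDm]
    have hpt2 : ∀ x : Torus d,
        ν' (Prod.mk x ⁻¹' {q : Torus d × Torus d | q.1 = q.2}) ≤ ENNReal.ofReal s / N := by
      intro x
      have hset : (Prod.mk x ⁻¹' {q : Torus d × Torus d | q.1 = q.2}) = {x} := by
        ext y; simp [eq_comm]
      rw [hset, hν'apply _ (measurableSet_singleton x)]
      by_cases hex : ∃ k ∈ C', t k = x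
      · obtain ⟨k0, hk0, hk0x⟩ := hex
        rw [Finset.sum_eq_single k0]
        · rw [Set.indicator_of_mem (by simp [hk0x]), Pi.one_apply, mul_one]
          exact ENNReal.div_le_div_right (hsmall k0 (hC'sub k0 hk0)) _
        · intro k hk hne
          rw [Set.indicator_of_notMem, mul_zero]
          simp only [Set.mem_singleton_iff]
          intro h
          have hmem : t k ∈ cell k0 := by rw [h, ← hk0x]; exact htmem k0 hk0
          have h2 := hsep k (hC'sub k hk) k0 (hC'sub k0 hk0) hne (t k) (htmem k hk) (t k) hmem
          rw [dist_self] at h2; linarith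
        · intro h; exact absurd hk0 h
      · push_neg at hex
        rw [Finset.sum_eq_zero]
        · exact zero_le
        · intro k hk
          rw [Set.indicator_of_notMem, mul_zero]
          simp only [Set.mem_singleton_iff]
          exact hex k hk
    calc ∫⁻ x, ν' (Prod.mk x ⁻¹' {q : Torus d × Torus d | q.1 = q.2}) ∂ν'
        ≤ ∫⁻ _, ENNReal.ofReal s / N ∂ν' := lintegral_mono hpt2
      _ = ENNReal.ofReal s / N := by rw [lintegral_const, measure_univ, mul_one]
  have hNlow : ENNReal.ofReal (β * I) ≤ N := by
    rw [← ENNReal.ofReal_toReal hNtop]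
    exact ENNReal.ofReal_le_ofReal hAN
  exact ⟨ν', hprob, ⟨T, hTc, hTsep⟩, hlow, hdiag.trans (ENNReal.div_le_div_left hNlow _)⟩

end AuxDecomp

/-- **Lemma (decomposition into separated measures).** -/
theorem decomposition_lemma
    {d : ℕ} (r s : ℝ) (hr : 0 < r) (hs : 0 < s)
    (ν : Measure (Torus d)) [IsProbabilityMeasure ν]
    (hν : ∀ z : Torus d, ν (Metric.closedBall z r) ≤ ENNReal.ofReal s)
    (f : Torus d → ℝ) (hf : Measurable f) (hf01 : ∀ x, f x ∈ Set.Icc (0:ℝ) 1) :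
    ∃ ν' : Measure (Torus d), IsProbabilityMeasure ν' ∧
      (∃ T : Finset (Torus d),
        ν' ((↑T : Set (Torus d))ᶜ) = 0 ∧ IsSep r (↑T : Set (Torus d))) ∧
      ((2:ℝ) ^ d)⁻¹ * ∫ x, f x ∂ν ≤ ∫ x, f x ∂ν' ∧
      (ν'.prod ν') {q : Torus d × Torus d | q.1 = q.2} ≤
        ENNReal.ofReal ((2:ℝ) ^ d * s) / ENNReal.ofReal (∫ x, f x ∂ν) := by
    classical
  set I := ∫ x, f x ∂ν with hIdef
  have hInn : 0 ≤ I := integral_nonneg fun x => (hf01 x).1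
  have hfint : ∀ (μ : Measure (Torus d)) [IsFiniteMeasure μ], Integrable f μ := by
    intro μ _
    refine (integrable_const (1:ℝ)).mono' hf.aestronglyMeasurable (ae_of_all _ fun x => ?_)
    rw [Real.norm_eq_abs, abs_of_nonneg (hf01 x).1]; exact (hf01 x).2
  have h2d : (0:ℝ) < 2 ^ d := by positivity
  have h2d1 : (1:ℝ) ≤ 2 ^ d := one_le_pow₀ (by norm_num)
  rcases eq_or_lt_of_le hInn with hI0 | hI
  · -- trivial case `∫ f dν = 0`
    set x₀ : Torus d := Classical.arbitrary _ with hx₀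
    refine ⟨Measure.dirac x₀, inferInstance, ⟨{x₀}, ?_, ?_⟩, ?_, ?_⟩
    · rw [Finset.coe_singleton, Measure.dirac_apply]
      simp
    · intro x hx y hy hxy
      rw [Finset.coe_singleton, Set.mem_singleton_iff] at hx hy
      exact absurd (hx.trans hy.symm) hxy
    · rw [integral_dirac, ← hI0, mul_zero]
      exact (hf01 _).1
    · rw [← hI0, ENNReal.ofReal_zero,
        ENNReal.div_zero (ENNReal.ofReal_pos.mpr (by positivity)).ne']
      exact le_top
  by_cases hr2 : r ≤ 1/2
  swap
  · -- case `r > 1/2` : every closed ball of radius `r` is everything, so `s ≥ 1`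
    push_neg at hr2
    set x₁ : Torus d := Classical.arbitrary _ with hx₁
    have hball : Metric.closedBall x₁ r = Set.univ := by
      ext y
      simp only [Metric.mem_closedBall, Set.mem_univ, iff_true]
      refine (dist_pi_le_iff (by linarith)).2 fun i => ?_
      rw [dist_eq_norm]
      have h := AddCircle.norm_le_half_period (p := (1:ℝ)) (x := y i - x₁ i) one_ne_zero
      rw [abs_one] at h
      linarith
    have hs1 : (1:ℝ) ≤ s := by
      have h := hν x₁
      rw [hball, measure_univ] at h
      exact ENNReal.one_le_ofReal.mp h
    have hI1 : I ≤ 1 := by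
      rw [hIdef]
      calc ∫ x, f x ∂ν ≤ ∫ _, (1:ℝ) ∂ν :=
            integral_mono (hfint ν) (integrable_const 1) (fun x => (hf01 x).2)
        _ = 1 := by simp
    obtain ⟨x₀, hx₀⟩ := exists_integral_le (hfint ν)
    refine ⟨Measure.dirac x₀, inferInstance, ⟨{x₀}, ?_, ?_⟩, ?_, ?_⟩
    · rw [Finset.coe_singleton, Measure.dirac_apply]
      simp
    · intro x hx y hy hxy
      rw [Finset.coe_singleton, Set.mem_singleton_iff] at hx hy
      exact absurd (hx.trans hy.symm) hxy
    · rw [integral_dirac]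
      have hβ1 : ((2:ℝ)^d)⁻¹ ≤ 1 := by
        rw [inv_le_one_iff₀]; right; exact h2d1
      have : ((2:ℝ)^d)⁻¹ * I ≤ I := by nlinarith
      exact this.trans hx₀
    · have hle1 : ((Measure.dirac x₀).prod (Measure.dirac x₀))
          {q : Torus d × Torus d | q.1 = q.2} ≤ 1 := prob_le_one
      refine hle1.trans ?_
      have h1 : ENNReal.ofReal I ≤ ENNReal.ofReal ((2:ℝ)^d * s) :=
        ENNReal.ofReal_le_ofReal (by nlinarith)
      calc (1:ℝ≥0∞) = ENNReal.ofReal I / ENNReal.ofReal I :=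
            (ENNReal.div_self (ENNReal.ofReal_pos.mpr hI).ne' ENNReal.ofReal_ne_top).symm
        _ ≤ ENNReal.ofReal ((2:ℝ)^d * s) / ENNReal.ofReal I :=
            ENNReal.div_le_div_right h1 _
  · -- main case `0 < I`, `r ≤ 1/2`
    set m := ⌊1/(2*r)⌋₊ with hm
    have h2r : (0:ℝ) < 2*r := by linarith
    have hm1 : 1 ≤ m := by
      rw [hm]
      refine Nat.le_floor ?_
      rw [Nat.cast_one, le_div_iff₀ h2r]
      linarith
    set n := 2 * m with hn
    have hn0 : 0 < n := by omega
    have hnR : (0:ℝ) < n := by exact_mod_cast hn0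
    have hmR : (1:ℝ) ≤ m := by exact_mod_cast hm1
    have hfl : (m:ℝ) ≤ 1/(2*r) := Nat.floor_le (by positivity)
    have hfl2 : 1/(2*r) < m + 1 := Nat.lt_floor_add_one _
    have hnm : (n:ℝ) = 2*m := by rw [hn]; push_cast; ring
    have hrn : r * n ≤ 1 := by
      have h1 : (n:ℝ) ≤ 1/r := by
        rw [hnm]
        calc (2:ℝ)*m ≤ 2*(1/(2*r)) := by linarith
          _ = 1/r := by field_simp
      calc r * n ≤ r * (1/r) := by nlinarith
        _ = 1 := by field_simp
    have hrn2 : 1 ≤ 2 * r * n := by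
      have h1 : 1/(2*r) ≤ (n:ℝ) := by rw [hnm]; linarith
      have := (div_le_iff₀ h2r).mp h1
      linarith
    have hEven : Even n := ⟨m, by omega⟩
    -- representatives
    set rep : AddCircle (1:ℝ) → ℝ := fun θ => ((AddCircle.equivIco 1 0 θ : ℝ)) with hrepdef
    have hrep_mem : ∀ θ, rep θ ∈ Set.Ico (0:ℝ) 1 := fun θ => by
      simpa using (AddCircle.equivIco 1 0 θ).2
    have hrep_coe : ∀ θ, ((rep θ : ℝ) : AddCircle (1:ℝ)) = θ := fun θ =>
      (AddCircle.equivIco 1 0).symm_apply_apply θ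
    have hrep_meas : Measurable rep :=
      measurable_subtype_coe.comp (AddCircle.measurableEquivIco 1 0).measurable
    set J : AddCircle (1:ℝ) → ℕ := fun θ => ⌊(n:ℝ) * rep θ⌋₊ with hJdef
    have hJ_meas : Measurable J := (measurable_const.mul hrep_meas).nat_floor
    have hJ_lt : ∀ θ, J θ < n := by
      intro θ
      rw [hJdef]
      refine (Nat.floor_lt (mul_nonneg hnR.le (hrep_mem θ).1)).mpr ?_
      have h2 := (hrep_mem θ).2
      nlinarith
    have hJle : ∀ θ, ((J θ : ℕ):ℝ) ≤ (n:ℝ) * rep θ := fun θ =>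
      Nat.floor_le (mul_nonneg hnR.le (hrep_mem θ).1)
    have hJlt : ∀ θ, (n:ℝ) * rep θ < (J θ : ℕ) + 1 := fun θ => Nat.lt_floor_add_one _
    -- cells
    set cell : (Fin d → Fin n) → Set (Torus d) :=
      fun k => {x | ∀ i, J (x i) = (k i : ℕ)} with hcelldef
    have hcell_meas : ∀ k, MeasurableSet (cell k) := by
      intro k
      have he : cell k = ⋂ i, (fun x : Torus d => x i) ⁻¹' (J ⁻¹' {((k i : ℕ) : ℕ)}) := by
        ext x
        simp [hcelldef, Set.mem_iInter]
      rw [he]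
      exact MeasurableSet.iInter fun i =>
        (hJ_meas.comp (measurable_pi_apply i)) (measurableSet_singleton _)
    -- cells are small
    have hsmall : ∀ k, ν (cell k) ≤ ENNReal.ofReal s := by
      intro k
      set z : Torus d := fun i => (((((k i : ℕ):ℝ)+2⁻¹)/n : ℝ) : AddCircle (1:ℝ)) with hzdef
      refine le_trans (measure_mono ?_) (hν z)
      intro x hx
      rw [Metric.mem_closedBall]
      refine (dist_pi_le_iff hr.le).2 fun i => ?_
      have hxi : J (x i) = (k i : ℕ) := hx i
      rw [dist_eq_norm]
      have hsub : x i - z i =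
          ((rep (x i) - ((((k i : ℕ):ℝ)+2⁻¹)/n) : ℝ) : AddCircle (1:ℝ)) := by
        rw [QuotientAddGroup.mk_sub, hrep_coe]
      rw [hsub]
      have hb := ball_coord hn0 (a := (k i : ℕ)) (u := rep (x i))
        (by rw [← hxi]; exact hJle (x i)) (by rw [← hxi]; exact_mod_cast hJlt (x i))
      refine hb.trans ?_
      rw [div_le_iff₀ (by positivity)]
      linarith
    -- colors
    set par : (Fin d → Fin n) → (Fin d → Bool) := fun k i => decide ((k i : ℕ) % 2 = 0)
      with hpardef
    have hIpart : I = ∑ k : (Fin d → Fin n), ∫ x in cell k, f x ∂ν := by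
      have hcover : ⋃ k, cell k = Set.univ := by
        ext x
        simp only [Set.mem_iUnion, Set.mem_univ, iff_true]
        exact ⟨fun i => ⟨J (x i), hJ_lt _⟩, fun i => rfl⟩
      have hdis : Pairwise (Function.onFun Disjoint cell) := by
        intro k k' hkk'
        rw [Function.onFun, Set.disjoint_left]
        intro x hxk hxk'
        exact hkk' (funext fun i => Fin.ext (by
          have h1 : J (x i) = (k i : ℕ) := hxk i
          have h2 : J (x i) = (k' i : ℕ) := hxk' i
          omega))
      rw [hIdef, ← setIntegral_univ, ← hcover,
        integral_iUnion hcell_meas hdis (hfint ν).integrableOn, tsum_fintype]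
    have hcardfun : (Fintype.card (Fin d → Bool)) = 2^d := by
      simp [Fintype.card_fun]
    obtain ⟨c, _, hc⟩ := Finset.exists_le_of_sum_le
      (Finset.univ_nonempty (α := Fin d → Bool))
      (f := fun _ => ((2:ℝ)^d)⁻¹ * I)
      (g := fun c => ∑ k ∈ Finset.univ.filter (fun k => par k = c), ∫ x in cell k, f x ∂ν)
      (by
        rw [Finset.sum_fiberwise, Finset.sum_const, Finset.card_univ, hcardfun,
          nsmul_eq_mul, ← hIpart]
        push_cast
        rw [mul_inv_cancel_left₀ h2d.ne'])
    set C : Finset (Fin d → Fin n) := Finset.univ.filter (fun k => par k = c) with hCdef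
    have hsep : ∀ k ∈ C, ∀ k' ∈ C, k ≠ k' →
        ∀ x ∈ cell k, ∀ y ∈ cell k', r ≤ dist x y := by
      intro k hk k' hk' hne x hx y hy
      obtain ⟨i, hi⟩ := Function.ne_iff.mp hne
      have hpareq : ((k i : ℕ)) % 2 = ((k' i : ℕ)) % 2 := by
        have h1 := (Finset.mem_filter.mp hk).2
        have h2 := (Finset.mem_filter.mp hk').2
        have h3 := congrFun (h1.trans h2.symm) i
        simp only [hpardef, decide_eq_decide] at h3
        omega
      have hivne : (k i : ℕ) ≠ (k' i : ℕ) := fun h => hi (Fin.ext h)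
      have hxi : J (x i) = (k i : ℕ) := hx i
      have hyi : J (y i) = (k' i : ℕ) := hy i
      calc r ≤ 1/(n:ℝ) := by rw [le_div_iff₀ hnR]; linarith
        _ ≤ ‖((rep (x i) - rep (y i) : ℝ) : AddCircle (1:ℝ))‖ :=
            sep_coord hn0 hEven (k i).isLt (k' i).isLt hivne hpareq
              (by rw [← hxi]; exact hJle (x i)) (by rw [← hxi]; exact_mod_cast hJlt (x i))
              (by rw [← hyi]; exact hJle (y i)) (by rw [← hyi]; exact_mod_cast hJlt (y i))
        _ = dist (x i) (y i) := by
            rw [dist_eq_norm, QuotientAddGroup.mk_sub, hrep_coe, hrep_coe]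
        _ ≤ dist x y := dist_le_pi_dist x y i
    obtain ⟨ν', hprob, hT, hlow, hdiag⟩ :=
      aux_decomp (β := ((2:ℝ)^d)⁻¹) hr (by positivity) ν f hf hf01 hI cell hcell_meas C
        (fun k _ => hsmall k) hsep hc
    refine ⟨ν', hprob, hT, hlow, hdiag.trans (le_of_eq ?_)⟩
    have hβI : (0:ℝ) < ((2:ℝ)^d)⁻¹ * I := mul_pos (by positivity) hI
    rw [← ENNReal.ofReal_div_of_pos hβI, ← ENNReal.ofReal_div_of_pos hI]
    congr 1
    field_simp
end

section
/- Let p be a prime, let η be a probability measure on 𝔽_p^d and Γ ⊂ SL_d(𝔽_p) a subgroup. Assume: (1) the only Γ-orbit in 𝔽_p^d of cardinality less than p is the singleton {0}; (2) for every x ∈ 𝔽_p^d, η(x) ≤ (40/41) ‖η‖_{L²}; and (3) ‖η̂‖_{L̂⁴} ≥ 19 p^{-1/4}. Then there exists h ∈ Γ such that ‖ |η̂| − 𝒜̂^θ(h)|η̂| ‖_{L̂⁴} ≥ (7/100) ‖η̂‖_{L̂⁴}. -/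
set_option synthInstance.maxHeartbeats 1000000
set_option maxHeartbeats 1000000
set_option linter.unusedSectionVars false

open MeasureTheory Matrix Filter Metric
open scoped BigOperators ENNReal Real

noncomputable section MazurAux

open Finset

variable {p d : ℕ} [NeZero p]

def eC (p : ℕ) (t : ZMod p) : ℂ :=
  Complex.exp (2 * Real.pi * Complex.I * (t.val : ℂ) / p)

lemma eC_eq (t : ZMod p) :
    eC p t = Complex.exp (((2 * Real.pi * t.val / p : ℝ) : ℂ) * Complex.I) := by
  unfold eC; push_cast; ring_nf

lemma abs_eC (t : ZMod p) : ‖eC p t‖ = 1 := by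
  rw [eC_eq]; exact Complex.norm_exp_ofReal_mul_I _

lemma eC_pow (t : ZMod p) :
    eC p t = Complex.exp (2 * Real.pi * Complex.I / p) ^ t.val := by
  rw [← Complex.exp_nat_mul]; unfold eC; ring_nf

lemma eC_root : Complex.exp (2 * Real.pi * Complex.I / p) ^ p = 1 := by
  rw [← Complex.exp_nat_mul]
  have hp : (p : ℂ) ≠ 0 := Nat.cast_ne_zero.mpr (NeZero.ne p)
  rw [show (p : ℂ) * (2 * Real.pi * Complex.I / p) = 2 * Real.pi * Complex.I by
    field_simp]
  exact Complex.exp_two_pi_mul_I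

lemma eC_add (s t : ZMod p) : eC p (s + t) = eC p s * eC p t := by
  rw [eC_pow, eC_pow, eC_pow, ← pow_add, ZMod.val_add]
  exact (pow_eq_pow_mod _ eC_root).symm

lemma eC_zero : eC p (0 : ZMod p) = 1 := by
  rw [eC_pow, ZMod.val_zero, pow_zero]

lemma eC_neg_mul (t : ZMod p) : eC p (-t) * eC p t = 1 := by
  rw [← eC_add, neg_add_cancel, eC_zero]

lemma conj_eC (t : ZMod p) : (starRingEnd ℂ) (eC p t) = eC p (-t) := by
  have h1 := Complex.inv_eq_conj (abs_eC t)
  rw [← h1]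
  exact (eq_inv_of_mul_eq_one_left (eC_neg_mul t)).symm

lemma eC_ne_one {t : ZMod p} (ht : t ≠ 0) : eC p t ≠ 1 := by
  intro h
  rw [eC] at h
  obtain ⟨n, hn⟩ := Complex.exp_eq_one_iff.mp h
  have hp : (p : ℂ) ≠ 0 := Nat.cast_ne_zero.mpr (NeZero.ne p)
  have hπ : (Real.pi : ℂ) ≠ 0 := by exact_mod_cast Real.pi_ne_zero
  have hI : Complex.I ≠ 0 := Complex.I_ne_zero
  have hc : (2 * Real.pi * Complex.I : ℂ) ≠ 0 := by
    simp [Real.pi_ne_zero, Complex.I_ne_zero]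
  have hval : (t.val : ℂ) = n * p := by
    set v := (t.val : ℂ) with hv
    field_simp at hn
    apply mul_left_cancel₀ hc
    linear_combination (2 * Real.pi * Complex.I) * hn
  have hvalZ : (t.val : ℤ) = n * p := by exact_mod_cast hval
  have h1 : 0 < (t.val : ℤ) := by
    have := ZMod.val_eq_zero (n := p)
    have hne : t.val ≠ 0 := fun h0 => ht ((ZMod.val_eq_zero t).mp h0)
    omega
  have h2 : (t.val : ℤ) < p := by exact_mod_cast ZMod.val_lt t
  have hpz : (0:ℤ) < p := by exact_mod_cast Nat.pos_of_ne_zero (NeZero.ne p)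
  have hn1 : 1 ≤ n := by nlinarith
  nlinarith


open Matrix in
lemma sum_eC_dot (a : Fin d → ZMod p) :
    ∑ x : Fin d → ZMod p, eC p (a ⬝ᵥ x) = if a = 0 then ((p : ℂ) ^ d) else 0 := by
  by_cases ha : a = 0
  · subst ha
    simp only [zero_dotProduct, eC_zero, Finset.sum_const, if_true]
    simp [Finset.card_univ, ZMod.card]
  · rw [if_neg ha]
    obtain ⟨i₀, hi₀⟩ := Function.ne_iff.mp ha
    set u : Fin d → ZMod p := Pi.single i₀ 1 with hu
    have key : ∀ x, a ⬝ᵥ (x + u) = a ⬝ᵥ x + a i₀ := by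
      intro x
      rw [dotProduct_add, hu, dotProduct_single, mul_one]
    have hshift : ∑ x : Fin d → ZMod p, eC p (a ⬝ᵥ x)
        = (∑ x : Fin d → ZMod p, eC p (a ⬝ᵥ x)) * eC p (a i₀) := by
      calc ∑ x : Fin d → ZMod p, eC p (a ⬝ᵥ x)
          = ∑ x : Fin d → ZMod p, eC p (a ⬝ᵥ ((Equiv.addRight u) x)) :=
            (Equiv.sum_comp (Equiv.addRight u) (fun x => eC p (a ⬝ᵥ x))).symm
        _ = ∑ x : Fin d → ZMod p, eC p (a ⬝ᵥ x) * eC p (a i₀) := by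
            refine Finset.sum_congr rfl fun x _ => ?_
            simp only [Equiv.coe_addRight]
            rw [key x, eC_add]
        _ = (∑ x : Fin d → ZMod p, eC p (a ⬝ᵥ x)) * eC p (a i₀) := by
            rw [Finset.sum_mul]
    have hne : eC p (a i₀) ≠ 1 := eC_ne_one (by simpa using hi₀)
    have hz : (∑ x : Fin d → ZMod p, eC p (a ⬝ᵥ x)) * (1 - eC p (a i₀)) = 0 := by
      linear_combination hshift
    rcases mul_eq_zero.mp hz with h | h
    · exact h
    · exact absurd (by linear_combination -h) hne

open Matrix in
lemma fhat_eq_eC (f : (Fin d → ZMod p) → ℝ) (a : Fin d → ZMod p) :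
    fhat f a = ∑ x, eC p (a ⬝ᵥ x) * (f x : ℂ) := rfl

open Matrix in
lemma conj_fhat (f : (Fin d → ZMod p) → ℝ) (a : Fin d → ZMod p) :
    (starRingEnd ℂ) (fhat f a) = ∑ y, eC p (a ⬝ᵥ (-y)) * (f y : ℂ) := by
  rw [fhat_eq_eC, map_sum]
  refine Finset.sum_congr rfl fun y _ => ?_
  rw [_root_.map_mul, conj_eC, Complex.conj_ofReal, dotProduct_neg]

open Matrix in
lemma parseval (f : (Fin d → ZMod p) → ℝ) :
    ∑ a : Fin d → ZMod p, Complex.normSq (fhat f a) = (p : ℝ) ^ d * ∑ x, (f x) ^ 2 := by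
  have step1 : ∀ a : Fin d → ZMod p, fhat f a * (starRingEnd ℂ) (fhat f a)
      = ∑ x, ∑ y, eC p (a ⬝ᵥ (x - y)) * ((f x : ℂ) * (f y : ℂ)) := by
    intro a
    rw [conj_fhat, fhat_eq_eC, Finset.sum_mul_sum]
    refine Finset.sum_congr rfl fun x _ => Finset.sum_congr rfl fun y _ => ?_
    rw [show x - y = x + (-y) by ring, dotProduct_add, eC_add]
    ring
  have key : ∑ a : Fin d → ZMod p, (fhat f a * (starRingEnd ℂ) (fhat f a))
      = ((p : ℂ) ^ d) * ∑ x, ((f x : ℂ)) ^ 2 := by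
    calc ∑ a : Fin d → ZMod p, (fhat f a * (starRingEnd ℂ) (fhat f a))
        = ∑ a : Fin d → ZMod p, ∑ x, ∑ y, eC p (a ⬝ᵥ (x - y)) * ((f x : ℂ) * (f y : ℂ)) :=
          Finset.sum_congr rfl fun a _ => step1 a
      _ = ∑ x, ∑ y, ∑ a : Fin d → ZMod p, eC p (a ⬝ᵥ (x - y)) * ((f x : ℂ) * (f y : ℂ)) := by
          rw [Finset.sum_comm]
          exact Finset.sum_congr rfl fun x _ => Finset.sum_comm
      _ = ∑ x, ∑ y, (if x - y = 0 then ((p:ℂ)^d) else 0) * ((f x : ℂ) * (f y : ℂ)) := by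
          refine Finset.sum_congr rfl fun x _ => Finset.sum_congr rfl fun y _ => ?_
          rw [← Finset.sum_mul]
          congr 1
          calc ∑ a : Fin d → ZMod p, eC p (a ⬝ᵥ (x - y))
              = ∑ a : Fin d → ZMod p, eC p ((x - y) ⬝ᵥ a) := by
                refine Finset.sum_congr rfl fun a _ => ?_
                rw [dotProduct_comm]
            _ = if x - y = 0 then ((p:ℂ)^d) else 0 := sum_eC_dot (x - y)
      _ = ∑ x, ((p:ℂ)^d) * ((f x : ℂ) * (f x : ℂ)) := by
          refine Finset.sum_congr rfl fun x _ => ?_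
          rw [Finset.sum_eq_single x]
          · rw [if_pos (sub_self x)]
          · intro y _ hy
            rw [if_neg (by simpa [sub_eq_zero] using (fun h => hy h.symm)), zero_mul]
          · intro h; exact absurd (Finset.mem_univ x) h
      _ = ((p : ℂ) ^ d) * ∑ x, ((f x : ℂ)) ^ 2 := by
          rw [Finset.mul_sum]; exact Finset.sum_congr rfl fun x _ => by ring
  have lhs : ∀ a, fhat f a * (starRingEnd ℂ) (fhat f a) = (Complex.normSq (fhat f a) : ℂ) := by
    intro a; rw [Complex.mul_conj]
  rw [Finset.sum_congr rfl (fun a _ => lhs a)] at key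
  have : ((∑ a : Fin d → ZMod p, Complex.normSq (fhat f a) : ℝ) : ℂ)
      = (((p : ℝ) ^ d * ∑ x, (f x) ^ 2 : ℝ) : ℂ) := by
    push_cast
    convert key using 2
  exact_mod_cast this


def tauF (η : (Fin d → ZMod p) → ℝ) (x : Fin d → ZMod p) : ℝ := ∑ y, η y * η (y - x)

open Matrix in
lemma fhat_tau (η : (Fin d → ZMod p) → ℝ) (a : Fin d → ZMod p) :
    fhat (tauF η) a = ((‖fhat η a‖) ^ 2 : ℝ) := by
  have : fhat (tauF η) a = fhat η a * (starRingEnd ℂ) (fhat η a) := by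
    calc fhat (tauF η) a
        = ∑ x, ∑ y, eC p (a ⬝ᵥ x) * ((η y : ℂ) * (η (y - x) : ℂ)) := by
          rw [fhat_eq_eC]
          refine Finset.sum_congr rfl fun x _ => ?_
          rw [show ((tauF η x : ℝ) : ℂ) = ∑ y, (η y : ℂ) * (η (y - x) : ℂ) by
            push_cast [tauF]; ring_nf, Finset.mul_sum]
      _ = ∑ y, ∑ x, eC p (a ⬝ᵥ x) * ((η y : ℂ) * (η (y - x) : ℂ)) := Finset.sum_comm
      _ = ∑ y, ∑ z, (eC p (a ⬝ᵥ y) * (η y : ℂ)) * (eC p (a ⬝ᵥ (-z)) * (η z : ℂ)) := by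
          refine Finset.sum_congr rfl fun y _ => ?_
          calc ∑ x, eC p (a ⬝ᵥ x) * ((η y : ℂ) * (η (y - x) : ℂ))
              = ∑ z, eC p (a ⬝ᵥ ((Equiv.subLeft y) z)) *
                  ((η y : ℂ) * (η (y - (Equiv.subLeft y) z) : ℂ)) :=
                (Equiv.sum_comp (Equiv.subLeft y)
                  (fun x => eC p (a ⬝ᵥ x) * ((η y : ℂ) * (η (y - x) : ℂ)))).symm
            _ = ∑ z, (eC p (a ⬝ᵥ y) * (η y : ℂ)) * (eC p (a ⬝ᵥ (-z)) * (η z : ℂ)) := by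
                refine Finset.sum_congr rfl fun z _ => ?_
                simp only [Equiv.subLeft_apply, sub_sub_cancel]
                rw [show y - z = y + (-z) by ring, dotProduct_add, eC_add]
                ring
      _ = (∑ y, eC p (a ⬝ᵥ y) * (η y : ℂ)) * (∑ z, eC p (a ⬝ᵥ (-z)) * (η z : ℂ)) :=
          (Finset.sum_mul_sum _ _ _ _).symm
      _ = fhat η a * (starRingEnd ℂ) (fhat η a) := by rw [← fhat_eq_eC, ← conj_fhat]
  rw [this, Complex.mul_conj]
  norm_cast
  rw [← Complex.sq_norm]

def mvE (g : Matrix.SpecialLinearGroup (Fin d) (ZMod p)) :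
    (Fin d → ZMod p) ≃ (Fin d → ZMod p) where
  toFun x := g.1.mulVec x
  invFun x := (g⁻¹).1.mulVec x
  left_inv x := by
    show (g⁻¹).1.mulVec (g.1.mulVec x) = x
    rw [Matrix.mulVec_mulVec, ← Matrix.SpecialLinearGroup.coe_mul, inv_mul_cancel,
      Matrix.SpecialLinearGroup.coe_one, Matrix.one_mulVec]
  right_inv x := by
    show g.1.mulVec ((g⁻¹).1.mulVec x) = x
    rw [Matrix.mulVec_mulVec, ← Matrix.SpecialLinearGroup.coe_mul, mul_inv_cancel,
      Matrix.SpecialLinearGroup.coe_one, Matrix.one_mulVec]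

def tE (g : Matrix.SpecialLinearGroup (Fin d) (ZMod p)) :
    (Fin d → ZMod p) ≃ (Fin d → ZMod p) where
  toFun a := g.1.transpose.mulVec a
  invFun a := (g⁻¹).1.transpose.mulVec a
  left_inv a := by
    show (g⁻¹).1.transpose.mulVec (g.1.transpose.mulVec a) = a
    rw [Matrix.mulVec_mulVec, ← Matrix.transpose_mul, ← Matrix.SpecialLinearGroup.coe_mul,
      mul_inv_cancel, Matrix.SpecialLinearGroup.coe_one, Matrix.transpose_one, Matrix.one_mulVec]
  right_inv a := by
    show g.1.transpose.mulVec ((g⁻¹).1.transpose.mulVec a) = a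
    rw [Matrix.mulVec_mulVec, ← Matrix.transpose_mul, ← Matrix.SpecialLinearGroup.coe_mul,
      inv_mul_cancel, Matrix.SpecialLinearGroup.coe_one, Matrix.transpose_one, Matrix.one_mulVec]

open Matrix in
lemma fhat_comp (f : (Fin d → ZMod p) → ℝ) (g : Matrix.SpecialLinearGroup (Fin d) (ZMod p))
    (a : Fin d → ZMod p) :
    fhat (fun x => f ((g⁻¹).1.mulVec x)) a = fhat f (g.1.transpose.mulVec a) := by
  rw [fhat_eq_eC, fhat_eq_eC]
  calc ∑ x, eC p (a ⬝ᵥ x) * (f ((g⁻¹).1.mulVec x) : ℂ)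
      = ∑ y, eC p (a ⬝ᵥ ((mvE g) y)) * (f ((g⁻¹).1.mulVec ((mvE g) y)) : ℂ) :=
        (Equiv.sum_comp (mvE g) (fun x => eC p (a ⬝ᵥ x) * (f ((g⁻¹).1.mulVec x) : ℂ))).symm
    _ = ∑ y, eC p ((g.1.transpose.mulVec a) ⬝ᵥ y) * (f y : ℂ) := by
        refine Finset.sum_congr rfl fun y _ => ?_
        have h1 : (g⁻¹).1.mulVec ((mvE g) y) = y := (mvE g).left_inv y
        have h2 : a ⬝ᵥ ((mvE g) y) = (g.1.transpose.mulVec a) ⬝ᵥ y := by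
          show a ⬝ᵥ (g.1 *ᵥ y) = _
          rw [Matrix.dotProduct_mulVec, Matrix.mulVec_transpose]
        rw [h1, h2]

lemma fhat_sub (f h : (Fin d → ZMod p) → ℝ) (a : Fin d → ZMod p) :
    fhat (fun x => f x - h x) a = fhat f a - fhat h a := by
  rw [fhat_eq_eC, fhat_eq_eC, fhat_eq_eC, ← Finset.sum_sub_distrib]
  refine Finset.sum_congr rfl fun x _ => ?_
  push_cast
  ring


lemma hatL4_nonneg (φ : (Fin d → ZMod p) → ℝ) : 0 ≤ hatL4 φ := by
  apply Real.rpow_nonneg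
  positivity

lemma hatL4_pow4 (φ : (Fin d → ZMod p) → ℝ) :
    hatL4 φ ^ 4 = ((p : ℝ) ^ d)⁻¹ * ∑ a, |φ a| ^ 4 := by
  have hX : (0:ℝ) ≤ (p : ℝ) ^ (-(d : ℤ)) * ∑ a, |φ a| ^ 4 := by positivity
  rw [hatL4, ← Real.rpow_natCast (_ ^ ((1:ℝ)/4)) 4, ← Real.rpow_mul hX]
  norm_num [_root_.zpow_neg, zpow_natCast]

lemma tau_nonneg (η : (Fin d → ZMod p) → ℝ) (hηnn : ∀ x, 0 ≤ η x) (x : Fin d → ZMod p) :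
    0 ≤ tauF η x :=
  Finset.sum_nonneg fun y _ => mul_nonneg (hηnn y) (hηnn _)

lemma tau_sum (η : (Fin d → ZMod p) → ℝ) (hη1 : ∑ x, η x = 1) :
    ∑ x, tauF η x = 1 := by
  unfold tauF
  rw [Finset.sum_comm]
  calc ∑ y, ∑ x, η y * η (y - x)
      = ∑ y : Fin d → ZMod p, η y * ∑ x, η (y - x) := by
        refine Finset.sum_congr rfl fun y _ => ?_; rw [Finset.mul_sum]
    _ = ∑ y : Fin d → ZMod p, η y * 1 := by
        refine Finset.sum_congr rfl fun y _ => ?_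
        congr 1
        calc ∑ x, η (y - x) = ∑ x, η ((Equiv.subLeft y) x) := rfl
          _ = ∑ x, η x := Equiv.sum_comp (Equiv.subLeft y) η
          _ = 1 := hη1
    _ = 1 := by simp [hη1]

lemma tau_zero (η : (Fin d → ZMod p) → ℝ) : tauF η 0 = ∑ y, η y ^ 2 := by
  unfold tauF
  refine Finset.sum_congr rfl fun y _ => ?_
  rw [sub_zero]; ring

end MazurAux

/-- **Lemma (a Fourier `L̂⁴`-difference bound, after Lindenstrauss–Varjú).** -/
theorem mazur_map_gap
    {p d : ℕ} [NeZero p] (hp : p.Prime)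
    (Γ : Subgroup (Matrix.SpecialLinearGroup (Fin d) (ZMod p)))
    (η : (Fin d → ZMod p) → ℝ) (hηnn : ∀ x, 0 ≤ η x) (hη1 : ∑ x, η x = 1)
    (horb : ∀ x : Fin d → ZMod p,
      (orbitSet (Γ : Set (Matrix.SpecialLinearGroup (Fin d) (ZMod p))) x).ncard < p → x = 0)
    (hmass : ∀ x : Fin d → ZMod p, η x ≤ (40 / 41) * l2R η)
    (hL4 : 19 * (p : ℝ) ^ (-(1:ℝ)/4) ≤ hatL4 (fun a => ‖fhat η a‖)) :
    ∃ h ∈ Γ,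
      (7 / 100) * hatL4 (fun a => ‖fhat η a‖) ≤
        hatL4 (fun a =>
          ‖fhat η a‖ - ‖fhat η (h.1.transpose.mulVec a)‖) := by
  classical
  set ψ : (Fin d → ZMod p) → ℝ := fun a => ‖fhat η a‖ with hψdef
  set τ : (Fin d → ZMod p) → ℝ := tauF η with hτdef
  set P : ℝ := (p : ℝ) ^ d with hPdef
  set ρ2 : ℝ := ∑ x, η x ^ 2 with hρ2def
  set T2 : ℝ := ∑ x, τ x ^ 2 with hT2def
  have hpR : (0:ℝ) < p := by exact_mod_cast hp.pos
  have hP : 0 < P := by positivity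
  have hψnn : ∀ a, 0 ≤ ψ a := fun a => norm_nonneg _
  have hτnn : ∀ x, 0 ≤ τ x := tau_nonneg η hηnn
  have hτ1 : ∑ x, τ x = 1 := tau_sum η hη1
  have hτ0 : τ 0 = ρ2 := tau_zero η
  have hρ2nn : 0 ≤ ρ2 := Finset.sum_nonneg fun x _ => sq_nonneg _
  have hl2 : l2R η ^ 2 = ρ2 := Real.sq_sqrt (Finset.sum_nonneg fun x _ => sq_nonneg _)
  have habs4 : ∀ r : ℝ, |r| ^ 4 = r ^ 4 := fun r => by
    rw [← abs_pow]; exact abs_of_nonneg (by positivity)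
  -- Parseval for τ : ∑ ψ⁴ = P * T2
  have hPT : ∑ a, ψ a ^ 4 = P * T2 := by
    calc ∑ a, ψ a ^ 4 = ∑ a, Complex.normSq (fhat (tauF η) a) := by
          refine Finset.sum_congr rfl fun a _ => ?_
          rw [fhat_tau, Complex.normSq_ofReal, hψdef]; ring
      _ = P * T2 := parseval (tauF η)
  -- hatL4 ψ ^ 4 = T2
  have hM4 : hatL4 ψ ^ 4 = T2 := by
    rw [hatL4_pow4]
    rw [show ∑ a, |ψ a| ^ 4 = ∑ a, ψ a ^ 4 from
      Finset.sum_congr rfl fun a _ => habs4 _]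
    rw [hPT]
    rw [hPdef]
    field_simp
  -- 19⁴ / p ≤ T2 and T2 > 0
  have hT2p : 130321 * (p:ℝ)⁻¹ ≤ T2 := by
    have h0 : (0:ℝ) ≤ 19 * (p : ℝ) ^ (-(1:ℝ)/4) := by positivity
    have h4 := pow_le_pow_left₀ h0 hL4 4
    rw [hM4] at h4
    calc (130321:ℝ) * (p:ℝ)⁻¹
        = (19 * (p : ℝ) ^ (-(1:ℝ)/4)) ^ 4 := by
          rw [mul_pow, ← Real.rpow_natCast ((p:ℝ) ^ (-(1:ℝ)/4)) 4,
            ← Real.rpow_mul (le_of_lt hpR)]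
          norm_num
          rw [Real.rpow_neg_one]
      _ ≤ T2 := h4
  have hT2pos : 0 < T2 := lt_of_lt_of_le (by positivity) hT2p
  by_contra hcon
  push_neg at hcon
  -- Step A : pointwise correlation bound for each group element
  have keyh : ∀ h : Matrix.SpecialLinearGroup (Fin d) (ZMod p), h ∈ Γ →
      (1 - 49/5000) * T2 ≤ ∑ x, τ x * τ ((h⁻¹).1.mulVec x) := by
    intro h hh
    have hsmall := hcon h hh
    have hsm : hatL4 (fun a => ψ a - ψ (h.1.transpose.mulVec a)) < 7/100 * hatL4 ψ := hsmall
    -- S1 : ∑ (ψ - ψ∘T)⁴ ≤ (7/100)⁴ * T2 * P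
    have hM0 : 0 < hatL4 ψ := by
      have : (0:ℝ) < 19 * (p : ℝ) ^ (-(1:ℝ)/4) := by positivity
      linarith [hL4]
    have hS1 : ∑ a, (ψ a - ψ (h.1.transpose.mulVec a)) ^ 4 ≤ (7/100)^4 * T2 * P := by
      have h1 := pow_le_pow_left₀ (hatL4_nonneg _)
        (le_of_lt hsm) 4
      rw [hatL4_pow4] at h1
      rw [show ∑ a, |ψ a - ψ (h.1.transpose.mulVec a)| ^ 4
          = ∑ a, (ψ a - ψ (h.1.transpose.mulVec a)) ^ 4 from
        Finset.sum_congr rfl fun a _ => habs4 _] at h1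
      rw [mul_pow, hM4] at h1
      calc ∑ a, (ψ a - ψ (h.1.transpose.mulVec a)) ^ 4
          = P * (P⁻¹ * ∑ a, (ψ a - ψ (h.1.transpose.mulVec a)) ^ 4) := by
            field_simp
        _ ≤ P * ((7/100)^4 * T2) := by
            apply mul_le_mul_of_nonneg_left _ (le_of_lt hP)
            exact h1
        _ = (7/100)^4 * T2 * P := by ring
    -- reindex : ∑ ψ(Ta)⁴ = P * T2
    have hreidx : ∑ a, ψ (h.1.transpose.mulVec a) ^ 4 = P * T2 := by
      calc ∑ a, ψ (h.1.transpose.mulVec a) ^ 4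
          = ∑ a, ψ ((tE h) a) ^ 4 := rfl
        _ = ∑ a, ψ a ^ 4 := Equiv.sum_comp (tE h) (fun a => ψ a ^ 4)
        _ = P * T2 := hPT
    -- S2 : ∑ (ψ + ψ∘T)⁴ ≤ 16 P T2
    have hS2 : ∑ a, (ψ a + ψ (h.1.transpose.mulVec a)) ^ 4 ≤ 16 * (P * T2) := by
      calc ∑ a, (ψ a + ψ (h.1.transpose.mulVec a)) ^ 4
          ≤ ∑ a, (8 * ψ a ^ 4 + 8 * ψ (h.1.transpose.mulVec a) ^ 4) := by
            refine Finset.sum_le_sum fun a _ => ?_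
            nlinarith [sq_nonneg (ψ a - ψ (h.1.transpose.mulVec a)),
              sq_nonneg (ψ a + ψ (h.1.transpose.mulVec a)),
              sq_nonneg (ψ a ^ 2 - ψ (h.1.transpose.mulVec a) ^ 2)]
        _ = 8 * (∑ a, ψ a ^ 4) + 8 * (∑ a, ψ (h.1.transpose.mulVec a) ^ 4) := by
            rw [Finset.sum_add_distrib, ← Finset.mul_sum, ← Finset.mul_sum]
        _ = 16 * (P * T2) := by rw [hPT, hreidx]; ring
    -- Parseval for the difference
    set D : ℝ := ∑ x, (τ x - τ ((h⁻¹).1.mulVec x)) ^ 2 with hDdef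
    have hDnn : 0 ≤ D := Finset.sum_nonneg fun x _ => sq_nonneg _
    have hPD : ∑ a, (ψ a ^ 2 - ψ (h.1.transpose.mulVec a) ^ 2) ^ 2 = P * D := by
      have hpar := parseval (fun x => τ x - τ ((h⁻¹).1.mulVec x))
      calc ∑ a, (ψ a ^ 2 - ψ (h.1.transpose.mulVec a) ^ 2) ^ 2
          = ∑ a, Complex.normSq (fhat (fun x => τ x - τ ((h⁻¹).1.mulVec x)) a) := by
            refine Finset.sum_congr rfl fun a _ => ?_
            rw [fhat_sub (tauF η) (fun x => tauF η ((h⁻¹).1.mulVec x)),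
              fhat_comp (tauF η) h, fhat_tau, fhat_tau, ← Complex.ofReal_sub,
              Complex.normSq_ofReal, hψdef]
            ring
        _ = P * D := hpar
    -- Cauchy–Schwarz
    have hCS : (∑ a, (ψ a ^ 2 - ψ (h.1.transpose.mulVec a) ^ 2) ^ 2) ^ 2
        ≤ (∑ a, (ψ a - ψ (h.1.transpose.mulVec a)) ^ 4)
          * (∑ a, (ψ a + ψ (h.1.transpose.mulVec a)) ^ 4) := by
      have := Finset.sum_mul_sq_le_sq_mul_sq Finset.univ
        (fun a => (ψ a - ψ (h.1.transpose.mulVec a)) ^ 2)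
        (fun a => (ψ a + ψ (h.1.transpose.mulVec a)) ^ 2)
      calc (∑ a, (ψ a ^ 2 - ψ (h.1.transpose.mulVec a) ^ 2) ^ 2) ^ 2
          = (∑ a, ((ψ a - ψ (h.1.transpose.mulVec a)) ^ 2)
              * ((ψ a + ψ (h.1.transpose.mulVec a)) ^ 2)) ^ 2 := by
            congr 1
            exact Finset.sum_congr rfl fun a _ => by ring
        _ ≤ (∑ a, ((ψ a - ψ (h.1.transpose.mulVec a)) ^ 2) ^ 2)
            * (∑ a, ((ψ a + ψ (h.1.transpose.mulVec a)) ^ 2) ^ 2) := this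
        _ = (∑ a, (ψ a - ψ (h.1.transpose.mulVec a)) ^ 4)
            * (∑ a, (ψ a + ψ (h.1.transpose.mulVec a)) ^ 4) := by
            congr 1
            · exact Finset.sum_congr rfl fun a _ => by ring
            · exact Finset.sum_congr rfl fun a _ => by ring
    -- D ≤ (49/2500) T2
    have hD : D ≤ 49/2500 * T2 := by
      have h2 : (P * D) ^ 2 ≤ ((7/100)^4 * T2 * P) * (16 * (P * T2)) := by
        rw [← hPD]
        calc (∑ a, (ψ a ^ 2 - ψ (h.1.transpose.mulVec a) ^ 2) ^ 2) ^ 2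
            ≤ (∑ a, (ψ a - ψ (h.1.transpose.mulVec a)) ^ 4)
              * (∑ a, (ψ a + ψ (h.1.transpose.mulVec a)) ^ 4) := hCS
          _ ≤ ((7/100)^4 * T2 * P) * (16 * (P * T2)) := by
              apply mul_le_mul hS1 hS2 (Finset.sum_nonneg fun a _ => by positivity)
              positivity
      have h3 : D ^ 2 ≤ (49/2500 * T2) ^ 2 := by
        have hP2 : 0 < P ^ 2 := by positivity
        rw [mul_pow] at h2
        have := (mul_le_mul_iff_of_pos_right hP2).mp (by linarith [h2] : D ^ 2 * P ^ 2 ≤ (49/2500 * T2)^2 * P ^ 2)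
        exact this
      nlinarith [hDnn, hT2pos, h3]
    -- expand D
    have hreidx2 : ∑ x, τ ((h⁻¹).1.mulVec x) ^ 2 = T2 := by
      calc ∑ x, τ ((h⁻¹).1.mulVec x) ^ 2
          = ∑ x, τ ((mvE h⁻¹) x) ^ 2 := rfl
        _ = ∑ x, τ x ^ 2 := Equiv.sum_comp (mvE h⁻¹) (fun y => τ y ^ 2)
    have hexp : D = T2 + T2 - 2 * ∑ x, τ x * τ ((h⁻¹).1.mulVec x) := by
      rw [hDdef, hT2def]
      rw [show ∑ x, (τ x - τ ((h⁻¹).1.mulVec x)) ^ 2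
          = ∑ x, (τ x ^ 2 + τ ((h⁻¹).1.mulVec x) ^ 2 - 2 * (τ x * τ ((h⁻¹).1.mulVec x))) from
        Finset.sum_congr rfl fun x _ => by ring]
      rw [Finset.sum_sub_distrib, Finset.sum_add_distrib, ← Finset.mul_sum, hreidx2]
    linarith [hD, hexp]
  have keyg : ∀ g : Matrix.SpecialLinearGroup (Fin d) (ZMod p), g ∈ Γ →
      (1 - 49/5000) * T2 ≤ ∑ x, τ x * τ (g.1.mulVec x) := by
    intro g hg
    have := keyh g⁻¹ (inv_mem hg)
    rwa [inv_inv] at this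
  -- averaging over Γ
  have havg : (1 - 49/5000) * T2 ≤ ρ2 ^ 2 + (p:ℝ)⁻¹ := by
    set n : ℕ := Fintype.card ↥Γ with hndef
    have hn : 0 < n := Fintype.card_pos
    have hnR : (0:ℝ) < n := by exact_mod_cast hn
    set A : (Fin d → ZMod p) → ℝ := fun x => ∑ g : ↥Γ, τ ((g : Matrix.SpecialLinearGroup (Fin d) (ZMod p)).1.mulVec x) with hAdef
    have hAnn : ∀ x, 0 ≤ A x := fun x => Finset.sum_nonneg fun g _ => hτnn _
    -- total lower bound
    have htot : (n:ℝ) * ((1 - 49/5000) * T2) ≤ ∑ x, τ x * A x := by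
      have h1 : ∀ g : ↥Γ, (1 - 49/5000) * T2
          ≤ ∑ x, τ x * τ ((g : Matrix.SpecialLinearGroup (Fin d) (ZMod p)).1.mulVec x) :=
        fun g => keyg g g.2
      calc (n:ℝ) * ((1 - 49/5000) * T2)
          = ∑ _g : ↥Γ, (1 - 49/5000) * T2 := by
            rw [Finset.sum_const, Finset.card_univ, nsmul_eq_mul, hndef]
        _ ≤ ∑ g : ↥Γ, ∑ x, τ x * τ ((g : Matrix.SpecialLinearGroup (Fin d) (ZMod p)).1.mulVec x) :=
            Finset.sum_le_sum fun g _ => h1 g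
        _ = ∑ x, ∑ g : ↥Γ, τ x * τ ((g : Matrix.SpecialLinearGroup (Fin d) (ZMod p)).1.mulVec x) :=
            Finset.sum_comm
        _ = ∑ x, τ x * A x := by
            refine Finset.sum_congr rfl fun x _ => ?_
            rw [hAdef, Finset.mul_sum]
    -- A 0 = n ρ2
    have hA0 : A 0 = (n:ℝ) * ρ2 := by
      rw [hAdef]
      simp only [Matrix.mulVec_zero, hτ0]
      rw [Finset.sum_const, Finset.card_univ, nsmul_eq_mul, hndef]
    -- A x ≤ n / p for x ≠ 0
    have hAle : ∀ x : Fin d → ZMod p, x ≠ 0 → (p:ℝ) * A x ≤ (n:ℝ) := by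
      intro x hx
      set fΓ : ↥Γ → (Fin d → ZMod p) :=
        fun g => (g : Matrix.SpecialLinearGroup (Fin d) (ZMod p)).1.mulVec x with hfΓ
      set B : Finset (Fin d → ZMod p) := Finset.univ.image fΓ with hBdef
      have hmaps : ∀ g : ↥Γ, g ∈ Finset.univ → fΓ g ∈ B :=
        fun g _ => Finset.mem_image_of_mem fΓ (Finset.mem_univ g)
      -- orbit has size ≥ p
      have hBp : p ≤ B.card := by
        by_contra hlt
        push_neg at hlt
        apply hx
        apply horb
        have hset : orbitSet (Γ : Set (Matrix.SpecialLinearGroup (Fin d) (ZMod p))) x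
            = (B : Set (Fin d → ZMod p)) := by
          rw [hBdef, Finset.coe_image, Finset.coe_univ, Set.image_univ, hfΓ]
          rw [orbitSet]
          rw [show (fun g : ↥Γ => (g : Matrix.SpecialLinearGroup (Fin d) (ZMod p)).1.mulVec x)
              = (fun γ : Matrix.SpecialLinearGroup (Fin d) (ZMod p) => γ.1.mulVec x) ∘
                (Subtype.val) from rfl]
          rw [Set.range_comp, Subtype.range_coe]
        rw [hset, Set.ncard_coe_finset]
        exact hlt
      -- all fibers have the same cardinality
      set k : ℕ := (Finset.univ.filter (fun g : ↥Γ => fΓ g = x)).card with hkdef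
      have hfib : ∀ g : ↥Γ, (Finset.univ.filter (fun h' : ↥Γ => fΓ h' = fΓ g)).card = k := by
        intro g
        rw [hkdef]
        apply Finset.card_bij' (fun h' _ => g⁻¹ * h') (fun h' _ => g * h')
        · intro h' hh'
          simp only [Finset.mem_filter, Finset.mem_univ, true_and] at hh' ⊢
          simp only [hfΓ] at hh' ⊢
          simp only [Subgroup.coe_mul, Subgroup.coe_inv]
          rw [Matrix.SpecialLinearGroup.coe_mul, ← Matrix.mulVec_mulVec, hh']
          rw [Matrix.mulVec_mulVec, ← Matrix.SpecialLinearGroup.coe_mul, inv_mul_cancel,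
            Matrix.SpecialLinearGroup.coe_one, Matrix.one_mulVec]
        · intro h' hh'
          simp only [Finset.mem_filter, Finset.mem_univ, true_and] at hh' ⊢
          simp only [hfΓ] at hh' ⊢
          simp only [Subgroup.coe_mul]
          rw [Matrix.SpecialLinearGroup.coe_mul, ← Matrix.mulVec_mulVec, hh']
        · intro h' _; group
        · intro h' _; group
      have hkn : k * B.card = n := by
        have hcards := Finset.card_eq_sum_card_fiberwise hmaps
        rw [Finset.card_univ] at hcards
        have : ∑ y ∈ B, (Finset.univ.filter (fun g : ↥Γ => fΓ g = y)).card = ∑ y ∈ B, k := by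
          refine Finset.sum_congr rfl fun y hy => ?_
          obtain ⟨g, _, hgy⟩ := Finset.mem_image.mp hy
          rw [← hgy]
          exact hfib g
        rw [this, Finset.sum_const, smul_eq_mul] at hcards
        rw [hndef, hcards]; ring
      -- A x ≤ k
      have hAk : A x ≤ (k:ℝ) := by
        have hsplit : A x = ∑ y ∈ B, ∑ _g ∈ Finset.univ.filter (fun g : ↥Γ => fΓ g = y), τ y :=
          (Finset.sum_fiberwise_of_maps_to' hmaps τ).symm
        rw [hsplit]
        have : ∀ y ∈ B, ∑ _g ∈ Finset.univ.filter (fun g : ↥Γ => fΓ g = y), τ y = (k:ℝ) * τ y := by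
          intro y hy
          obtain ⟨g, _, hgy⟩ := Finset.mem_image.mp hy
          rw [Finset.sum_const, nsmul_eq_mul]
          congr 1
          rw [← hgy]
          exact_mod_cast congrArg Nat.cast (hfib g)
        rw [Finset.sum_congr rfl this, ← Finset.mul_sum]
        calc (k:ℝ) * ∑ y ∈ B, τ y ≤ (k:ℝ) * 1 := by
              apply mul_le_mul_of_nonneg_left _ (Nat.cast_nonneg k)
              rw [← hτ1]
              exact Finset.sum_le_sum_of_subset_of_nonneg (Finset.subset_univ B)
                (fun y _ _ => hτnn y)
          _ = (k:ℝ) := mul_one _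
      calc (p:ℝ) * A x ≤ (p:ℝ) * (k:ℝ) :=
            mul_le_mul_of_nonneg_left hAk (le_of_lt hpR)
        _ ≤ (B.card : ℝ) * (k:ℝ) := by
            apply mul_le_mul_of_nonneg_right _ (Nat.cast_nonneg k)
            exact_mod_cast hBp
        _ = (n:ℝ) := by rw [← hkn]; push_cast; ring
    -- assemble
    have hsum : ∑ x, τ x * A x ≤ (n:ℝ) * ρ2 ^ 2 + (n:ℝ) * (p:ℝ)⁻¹ := by
      rw [← Finset.add_sum_erase Finset.univ (fun x => τ x * A x) (Finset.mem_univ 0)]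
      have h0 : τ 0 * A 0 = (n:ℝ) * ρ2 ^ 2 := by rw [hτ0, hA0]; ring
      have herase : ∑ x ∈ Finset.univ.erase 0, τ x * A x ≤ (n:ℝ) * (p:ℝ)⁻¹ := by
        calc ∑ x ∈ Finset.univ.erase 0, τ x * A x
            ≤ ∑ x ∈ Finset.univ.erase 0, τ x * ((n:ℝ) * (p:ℝ)⁻¹) := by
              refine Finset.sum_le_sum fun x hx => ?_
              have hx0 : x ≠ 0 := (Finset.mem_erase.mp hx).1
              apply mul_le_mul_of_nonneg_left _ (hτnn x)
              calc A x ≤ (n:ℝ) / p := by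
                    rw [le_div_iff₀ hpR]; linarith [hAle x hx0]
                _ = (n:ℝ) * (p:ℝ)⁻¹ := by ring
          _ = (∑ x ∈ Finset.univ.erase 0, τ x) * ((n:ℝ) * (p:ℝ)⁻¹) := by
              rw [Finset.sum_mul]
          _ ≤ 1 * ((n:ℝ) * (p:ℝ)⁻¹) := by
              apply mul_le_mul_of_nonneg_right _ (by positivity)
              rw [← hτ1]
              exact Finset.sum_le_sum_of_subset_of_nonneg (Finset.subset_univ _)
                (fun y _ _ => hτnn y)
          _ = (n:ℝ) * (p:ℝ)⁻¹ := one_mul _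
      linarith [h0, herase]
    have := le_trans htot hsum
    have hfin : (n:ℝ) * ((1 - 49/5000) * T2) ≤ (n:ℝ) * (ρ2 ^ 2 + (p:ℝ)⁻¹) := by
      linarith [this]
    exact le_of_mul_le_mul_left (by linarith [hfin]) hnR
  -- non-concentration : T2 ≥ (2 - (40/41)²) ρ2²
  have hT2low : (2 - 1600/1681) * ρ2 ^ 2 ≤ T2 := by
    set σ : (Fin d → ZMod p) → ℝ := fun x => ∑ y, η y ^ 2 * η (y - x) ^ 2 with hσdef
    have hστ : ∀ x, σ x ≤ τ x ^ 2 := by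
      intro x
      have h1 : σ x = ∑ y, (η y * η (y - x)) ^ 2 := by
        rw [hσdef]
        exact Finset.sum_congr rfl fun y _ => by ring
      have h2 : τ x = ∑ y, η y * η (y - x) := rfl
      rw [h1, h2]
      exact Finset.sum_sq_le_sq_sum_of_nonneg fun y _ => mul_nonneg (hηnn y) (hηnn _)
    have hσsum : ∑ x, σ x = ρ2 ^ 2 := by
      rw [hσdef, Finset.sum_comm]
      calc ∑ y, ∑ x, η y ^ 2 * η (y - x) ^ 2
          = ∑ y : Fin d → ZMod p, η y ^ 2 * ∑ x, η (y - x) ^ 2 := by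
            exact Finset.sum_congr rfl fun y _ => by rw [Finset.mul_sum]
        _ = ∑ y : Fin d → ZMod p, η y ^ 2 * ρ2 := by
            refine Finset.sum_congr rfl fun y _ => ?_
            congr 1
            calc ∑ x, η (y - x) ^ 2 = ∑ x, η ((Equiv.subLeft y) x) ^ 2 := rfl
              _ = ∑ x, η x ^ 2 := Equiv.sum_comp (Equiv.subLeft y) (fun z => η z ^ 2)
              _ = ρ2 := by rw [hρ2def]
        _ = ρ2 ^ 2 := by rw [← Finset.sum_mul, ← hρ2def]; ring
    have hσ0 : σ 0 ≤ 1600/1681 * ρ2 ^ 2 := by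
      have hsq : ∀ y, η y ^ 2 ≤ 1600/1681 * ρ2 := by
        intro y
        have h1 := hmass y
        have h2 := hηnn y
        have h3 : η y ^ 2 ≤ (40/41 * l2R η) ^ 2 := by
          apply pow_le_pow_left₀ h2 h1
        calc η y ^ 2 ≤ (40/41 * l2R η) ^ 2 := h3
          _ = 1600/1681 * l2R η ^ 2 := by ring
          _ = 1600/1681 * ρ2 := by rw [hl2]
      calc σ 0 = ∑ y, η y ^ 2 * η y ^ 2 := by
            rw [hσdef]
            exact Finset.sum_congr rfl fun y _ => by rw [sub_zero]
        _ ≤ ∑ y, 1600/1681 * ρ2 * η y ^ 2 := by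
            refine Finset.sum_le_sum fun y _ => ?_
            exact mul_le_mul_of_nonneg_right (hsq y) (sq_nonneg _)
        _ = 1600/1681 * ρ2 * ρ2 := by rw [← Finset.mul_sum, ← hρ2def]
        _ = 1600/1681 * ρ2 ^ 2 := by ring
    have hτ0sq : τ 0 ^ 2 = ρ2 ^ 2 := by rw [hτ0]
    have hsplitT : T2 = τ 0 ^ 2 + ∑ x ∈ Finset.univ.erase 0, τ x ^ 2 := by
      rw [hT2def, ← Finset.add_sum_erase Finset.univ (fun x => τ x ^ 2) (Finset.mem_univ 0)]
    have hsplitσ : σ 0 + ∑ x ∈ Finset.univ.erase 0, σ x = ρ2 ^ 2 := by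
      rw [Finset.add_sum_erase Finset.univ σ (Finset.mem_univ 0)]
      exact hσsum
    have hmono : ∑ x ∈ Finset.univ.erase 0, σ x ≤ ∑ x ∈ Finset.univ.erase 0, τ x ^ 2 :=
      Finset.sum_le_sum fun x _ => hστ x
    linarith [hsplitT, hsplitσ, hmono, hσ0, hτ0sq]
  linarith [havg, hT2low, hT2p, hT2pos]
end
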